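/- arXiv:2001.03832 — 4 statements merged into one kernel-verified Lean document; each statement's English description precedes it below -/
import Mathlib

section
/- For any nonempty index 𝐤=(k₁,…,k_r), the identity Σ_{m=0}^{r−1} (−1)^m Σ_{□ patterns with exactly m plus signs} (k₁□k₂□⋯□k_r)⋆ = (k₁,…,k_r) holds in ℛ, where the inner sum is over all assignments □ of comma/plus to the r−1 separators between consecutive entries having exactly m plus signs, (k₁□⋯□k_r) denotes the index obtained by adding together the entries joined by plus signs, and ⋆ is applied to that merged index. -/
/-- `ℛ`, the free `ℚ`-vector space on the set of indices (realized as lists of naturals;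
indices are the lists all of whose entries are positive). -/
abbrev RSp : Type := List ℕ →₀ ℚ

/-- Merge an interleaved sequence `a □ b₁ □ b₂ ⋯`: a `true` separator is a plus sign
(the adjacent entries are added together), a `false` separator is a comma. -/
def mergeP : ℕ → List (Bool × ℕ) → List ℕ
  | a, [] => [a]
  | a, (true, b) :: rest => mergeP (a + b) rest
  | a, (false, b) :: rest => a :: mergeP b rest

/-- `𝐤⋆ ∈ ℛ`: the sum over all `2^{r−1}` comma/plus patterns of the merged index. -/
noncomputable def starIdx : List ℕ → RSp
  | [] => 0
  | a :: rest =>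
      ∑ s : Fin rest.length → Bool,
        Finsupp.single (mergeP a ((List.ofFn s).zip rest)) (1 : ℚ)

/-- The sum, over all comma/plus patterns of `𝐤` with exactly `m` plus signs,
of `(merged index)⋆ ∈ ℛ`. -/
noncomputable def starIdxM : List ℕ → ℕ → RSp
  | [], _ => 0
  | a :: rest, m =>
      ∑ s : Fin rest.length → Bool,
        if (List.ofFn s).count true = m then starIdx (mergeP a ((List.ofFn s).zip rest)) else 0

/-- The sum, over all comma/plus patterns of `𝐤` with exactly `m` plus signs,
of the merged index, as an element of `ℛ`. -/
noncomputable def mergeM : List ℕ → ℕ → RSp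
  | [], _ => 0
  | a :: rest, m =>
      ∑ s : Fin rest.length → Bool,
        if (List.ofFn s).count true = m then
          Finsupp.single (mergeP a ((List.ofFn s).zip rest)) (1 : ℚ) else 0

/-- Given a cyclic comma/plus pattern `s` on `𝐤` (`s[i]` sits between the `i`-th and the
`(i+1)`-st entry, cyclically) having at least one comma, merge the cyclically adjacent
entries joined by plus signs, reading the cycle linearly starting right after the first
comma (this fixes a choice of cyclic rotation of the merged index). -/
def cycMerge (K : List ℕ) (s : List Bool) : List ℕ :=
  match K.rotate (s.idxOf false + 1) with
  | [] => []
  | a :: rest => mergeP a ((s.rotate (s.idxOf false + 1)).zip rest)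

/-- `S_m(𝐤) ∈ ℛ`: the sum, over all cyclic comma/plus patterns of `𝐤` with exactly `m`
plus signs, of (a chosen cyclic rotation of) the cyclically merged index. -/
noncomputable def SmDef (K : List ℕ) (m : ℕ) : RSp :=
  ∑ s : Fin K.length → Bool,
    if (List.ofFn s).count true = m then
      Finsupp.single (cycMerge K (List.ofFn s)) (1 : ℚ) else 0

/-- For `M = Σ_𝐤 c_𝐤·𝐤 ∈ ℛ`, the weighted sum `Σ_{𝐤 ∈ M} f(𝐤) := Σ_𝐤 c_𝐤 • f(𝐤)`;
here used with `M = S_m(𝐤)`, giving the notation `Σ_{(l₁,…,l_{r−m}) ∈ S_m(𝐤)} f(l)`. -/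
noncomputable def Ssum (K : List ℕ) (m : ℕ) (f : List ℕ → RSp) : RSp :=
  Finsupp.sum (SmDef K m) fun l c => c • f l


section Aux

/-- Recursive form of the inner star sum: `starT a l = (a::l)⋆`. -/
noncomputable def starT : ℕ → List ℕ → RSp
  | a, [] => Finsupp.single [a] (1 : ℚ)
  | a, b :: l => starT (a + b) l + Finsupp.mapDomain (List.cons a) (starT b l)

lemma sum_pi_succ {M : Type*} [AddCommMonoid M] (n : ℕ) (f : (Fin (n+1) → Bool) → M) :
    ∑ s : Fin (n+1) → Bool, f s
      = (∑ s : Fin n → Bool, f (Fin.cons false s)) + ∑ s : Fin n → Bool, f (Fin.cons true s) := by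
  rw [← Fintype.sum_equiv (Fin.consEquiv (fun _ : Fin (n+1) => Bool))
      (fun p => f (Fin.cons p.1 p.2)) f (fun p => rfl), Fintype.sum_prod_type, Fintype.sum_bool,
      add_comm]

lemma ofFn_cons (n : ℕ) (b : Bool) (s : Fin n → Bool) :
    List.ofFn (Fin.cons b s) = b :: List.ofFn s := by
  simp [List.ofFn_succ]

lemma count_true_cons_false (L : List Bool) :
    (false :: L).count true = L.count true := by simp [List.count_cons]

lemma count_true_cons_true (L : List Bool) :
    (true :: L).count true = L.count true + 1 := by simp [List.count_cons]

lemma starT_eq (l : List ℕ) : ∀ a : ℕ,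
    (∑ s : Fin l.length → Bool, Finsupp.single (mergeP a ((List.ofFn s).zip l)) (1 : ℚ))
      = starT a l := by
  induction l with
  | nil => intro a; simp [starT, mergeP]
  | cons b l ih =>
    intro a
    rw [List.length_cons, sum_pi_succ]
    simp only [ofFn_cons, List.zip_cons_cons, mergeP]
    rw [ih (a + b),
      show starT a (b :: l)
        = starT (a + b) l + Finsupp.mapDomain (List.cons a) (starT b l) from rfl,
      add_comm]
    congr 1
    rw [← ih b, Finsupp.mapDomain_finset_sum]
    exact Finset.sum_congr rfl fun s _ => (Finsupp.mapDomain_single).symm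

lemma starIdx_cons (a : ℕ) (l : List ℕ) : starIdx (a :: l) = starT a l := starT_eq l a

lemma G_eq (l : List ℕ) : ∀ a b : ℕ,
    (∑ s : Fin l.length → Bool,
        ((-1 : ℚ) ^ ((List.ofFn s).count true)) •
          starT a (mergeP b ((List.ofFn s).zip l)))
      = Finsupp.single (a :: b :: l) (1 : ℚ) + Finsupp.single ((a + b) :: l) (1 : ℚ) := by
  induction l with
  | nil =>
    intro a b
    simp [mergeP, starT, Finsupp.mapDomain_single, add_comm]
  | cons c l ih =>
    intro a b
    rw [List.length_cons, sum_pi_succ]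
    simp only [ofFn_cons, List.zip_cons_cons, count_true_cons_false, count_true_cons_true, mergeP]
    have hfalse :
        (∑ s : Fin l.length → Bool,
            ((-1 : ℚ) ^ ((List.ofFn s).count true)) •
              starT a (b :: mergeP c ((List.ofFn s).zip l)))
          = (Finsupp.single ((a + b) :: c :: l) (1 : ℚ)
              + Finsupp.single ((a + b + c) :: l) (1 : ℚ))
            + (Finsupp.single (a :: b :: c :: l) (1 : ℚ)
              + Finsupp.single (a :: (b + c) :: l) (1 : ℚ)) := by
      have expand : ∀ s : Fin l.length → Bool,
          starT a (b :: mergeP c ((List.ofFn s).zip l))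
            = starT (a + b) (mergeP c ((List.ofFn s).zip l))
              + Finsupp.mapDomain (List.cons a) (starT b (mergeP c ((List.ofFn s).zip l))) :=
        fun s => rfl
      simp only [expand, smul_add, Finset.sum_add_distrib]
      rw [ih (a + b) c]
      congr 1
      have move : (∑ s : Fin l.length → Bool,
            ((-1 : ℚ) ^ ((List.ofFn s).count true)) •
              Finsupp.mapDomain (List.cons a) (starT b (mergeP c ((List.ofFn s).zip l))))
          = Finsupp.mapDomain (List.cons a)
              (∑ s : Fin l.length → Bool,
                ((-1 : ℚ) ^ ((List.ofFn s).count true)) •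
                  starT b (mergeP c ((List.ofFn s).zip l))) := by
        rw [Finsupp.mapDomain_finset_sum]
        exact Finset.sum_congr rfl fun s _ => (Finsupp.mapDomain_smul _ _).symm
      rw [move, ih b c, Finsupp.mapDomain_add, Finsupp.mapDomain_single,
        Finsupp.mapDomain_single]
    have htrue :
        (∑ s : Fin l.length → Bool,
            ((-1 : ℚ) ^ ((List.ofFn s).count true + 1)) •
              starT a (mergeP (b + c) ((List.ofFn s).zip l)))
          = -(Finsupp.single (a :: (b + c) :: l) (1 : ℚ)
              + Finsupp.single ((a + (b + c)) :: l) (1 : ℚ)) := by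
      rw [← ih a (b + c), ← Finset.sum_neg_distrib]
      exact Finset.sum_congr rfl fun s _ => by
        rw [pow_succ, mul_neg_one, neg_smul]
    rw [hfalse, htrue, ← add_assoc a b c]
    abel

lemma F_eq (l : List ℕ) : ∀ a : ℕ,
    (∑ s : Fin l.length → Bool,
        ((-1 : ℚ) ^ ((List.ofFn s).count true)) •
          starIdx (mergeP a ((List.ofFn s).zip l)))
      = Finsupp.single (a :: l) (1 : ℚ) := by
  induction l with
  | nil =>
    intro a
    simp [mergeP, starIdx_cons, starT]
  | cons c l ih =>
    intro a
    rw [List.length_cons, sum_pi_succ]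
    simp only [ofFn_cons, List.zip_cons_cons, count_true_cons_false, count_true_cons_true, mergeP]
    have hfalse :
        (∑ s : Fin l.length → Bool,
            ((-1 : ℚ) ^ ((List.ofFn s).count true)) •
              starIdx (a :: mergeP c ((List.ofFn s).zip l)))
          = Finsupp.single (a :: c :: l) (1 : ℚ) + Finsupp.single ((a + c) :: l) (1 : ℚ) := by
      rw [← G_eq l a c]
      exact Finset.sum_congr rfl fun s _ => by rw [starIdx_cons]
    have htrue :
        (∑ s : Fin l.length → Bool,
            ((-1 : ℚ) ^ ((List.ofFn s).count true + 1)) •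
              starIdx (mergeP (a + c) ((List.ofFn s).zip l)))
          = -Finsupp.single ((a + c) :: l) (1 : ℚ) := by
      rw [← ih (a + c), ← Finset.sum_neg_distrib]
      exact Finset.sum_congr rfl fun s _ => by
        rw [pow_succ, mul_neg_one, neg_smul]
    rw [hfalse, htrue]
    abel

end Aux

/-- **Lemma 6.2** of Hirose–Murahara–Ono: for a nonempty index `𝐤 = (k₁,…,k_r)`,
`Σ_{m=0}^{r−1} (−1)^m Σ_{□ patterns with exactly m plus signs} (k₁□⋯□k_r)⋆ = (k₁,…,k_r)`
holds in `ℛ`. -/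
theorem alternating_star_sum_eq_single (K : List ℕ) (hne : K ≠ [])
    (hpos : ∀ x ∈ K, 0 < x) :
    ∑ m ∈ Finset.range K.length, (-1 : ℚ) ^ m • starIdxM K m
      = Finsupp.single K (1 : ℚ) := by
  obtain ⟨a, rest, rfl⟩ : ∃ a rest, K = a :: rest := by
    cases K with
    | nil => exact absurd rfl hne
    | cons a rest => exact ⟨a, rest, rfl⟩
  have hunfold : ∀ m, starIdxM (a :: rest) m
      = ∑ s : Fin rest.length → Bool,
          if (List.ofFn s).count true = m then
            starIdx (mergeP a ((List.ofFn s).zip rest)) else 0 := fun m => rfl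
  simp only [hunfold, List.length_cons, Finset.smul_sum]
  rw [Finset.sum_comm]
  have step : ∀ s : Fin rest.length → Bool,
      (∑ m ∈ Finset.range (rest.length + 1),
          (-1 : ℚ) ^ m • (if (List.ofFn s).count true = m then
            starIdx (mergeP a ((List.ofFn s).zip rest)) else 0))
        = ((-1 : ℚ) ^ ((List.ofFn s).count true)) •
            starIdx (mergeP a ((List.ofFn s).zip rest)) := by
    intro s
    have h1 : ∀ m, (-1 : ℚ) ^ m • (if (List.ofFn s).count true = m then
          starIdx (mergeP a ((List.ofFn s).zip rest)) else 0)
        = if (List.ofFn s).count true = m then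
            (-1 : ℚ) ^ m • starIdx (mergeP a ((List.ofFn s).zip rest)) else 0 := by
      intro m; split <;> simp
    simp only [h1]
    rw [Finset.sum_ite_eq, if_pos]
    rw [Finset.mem_range, Nat.lt_succ_iff]
    calc (List.ofFn s).count true ≤ (List.ofFn s).length := List.count_le_length
      _ = rest.length := by simp
  rw [Finset.sum_congr rfl fun s _ => step s, F_eq]
end

section
/- For a nonempty index 𝐤=(k₁,…,k_r) and an integer 0 ≤ m ≤ r−1, the following identity holds in ℛ: Σ_{i=1}^{r−m} Σ_{(l₁,…,l_{r−m}) ∈ S_m(𝐤)} (l_{i+1},…,l_{r−m},l₁,…,l_i) = Σ_{i=1}^{r} Σ_{□ patterns} (merged index of (k_{i+1},…,k_r,k₁,…,k_i) under □), where on the right the inner sum is over all assignments □ of comma/plus to the r−1 separators of the rotated tuple (k_{i+1},…,k_r,k₁,…,k_i) having exactly m plus signs, and the merged index is obtained by adding together entries joined by plus signs. -/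
/-- read a (possibly rotated) cycle linearly -/
def readP : List ℕ → List Bool → List ℕ
  | [], _ => []
  | a :: rest, s => mergeP a (s.zip rest)

def cycRead (K : List ℕ) (s : List Bool) (j : ℕ) : List ℕ :=
  readP (K.rotate j) (s.rotate j)

lemma mergeP_append (l₁ : List (Bool × ℕ)) (a b : ℕ) (l₂ : List (Bool × ℕ)) :
    mergeP a (l₁ ++ (false, b) :: l₂) = mergeP a l₁ ++ mergeP b l₂ := by
  induction l₁ generalizing a with
  | nil => simp [mergeP]
  | cons p t ih =>
    obtain ⟨c, n⟩ := p
    cases c <;> simp [mergeP, ih]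

lemma mergeP_length (a : ℕ) (l : List (Bool × ℕ)) :
    (mergeP a l).length = l.countP (fun p => p.1 == false) + 1 := by
  induction l generalizing a with
  | nil => simp [mergeP]
  | cons p t ih =>
    obtain ⟨c, n⟩ := p
    cases c <;> simp [mergeP, ih, List.countP_cons] <;> omega

lemma zip_trunc {u : List Bool} {rest : List ℕ} (h : u.length = rest.length) (x : List Bool) :
    (u ++ x).zip rest = u.zip rest := by
  have := List.zip_append (l₁ := u) (r₁ := x) (l₂ := rest) (r₂ := ([] : List ℕ)) h
  simpa using this

lemma count_false_add_count_true (l : List Bool) : l.count false + l.count true = l.length := by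
  induction l with
  | nil => rfl
  | cons b t ih => cases b <;> simp [List.count_cons, ih] <;> omega

lemma count_rotate (l : List Bool) (n : ℕ) (b : Bool) : (l.rotate n).count b = l.count b :=
  (List.rotate_perm l n).count_eq b

lemma sumH {M : Type*} [AddCommMonoid M] (l : List Bool) (g : ℕ → M) :
    (∑ j ∈ Finset.range l.length,
      if l[j]? = some false then g ((l.take (j+1)).count false) else 0)
      = ∑ d ∈ Finset.range (l.count false), g (d+1) := by
  induction l generalizing g with
  | nil => simp
  | cons b t ih =>
    rw [List.length_cons, Finset.sum_range_succ']
    cases b with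
    | true =>
      simp only [List.getElem?_cons_succ, List.getElem?_cons_zero, List.take_succ_cons,
        List.count_cons, List.take_zero, beq_iff_eq, reduceCtorEq, if_false, if_true,
        reduceIte, add_zero]
      simpa using ih g
    | false =>
      simp only [List.getElem?_cons_succ, List.getElem?_cons_zero, List.take_succ_cons,
        List.count_cons, List.take_zero, beq_self_eq_true, if_true, reduceIte,
        List.count_nil, zero_add]
      rw [Finset.sum_range_succ' (fun d => g (d+1)) (t.count false)]
      have key : (∑ j ∈ Finset.range t.length,
          if t[j]? = some false then g (List.count false (t.take (j+1)) + 1) else 0)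
          = ∑ d ∈ Finset.range (t.count false), g (d + 1 + 1) :=
        ih (fun d => g (d+1))
      rw [show (0:ℕ) + 1 = 1 from rfl]
      convert congrArg (· + g 1) key using 2

lemma countP_fst_zip (u : List Bool) (r : List ℕ) (h : u.length ≤ r.length) :
    (u.zip r).countP (fun p => p.1 == false) = u.count false := by
  have hm : List.map Prod.fst (u.zip r) = u := List.map_fst_zip h
  have h2 := List.countP_map (p := fun x => x == false) (f := (Prod.fst : Bool × ℕ → Bool)) (l := u.zip r)
  rw [hm, Function.comp_def] at h2
  rw [List.count_eq_countP, ← h2]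

lemma rotate_append_len {α : Type*} (A B : List α) : (A ++ B).rotate A.length = B ++ A := by
  rw [List.rotate_eq_drop_append_take (by simp), List.drop_left, List.take_left]

/-- reading the cycle `a::rest` with pattern `u ++ [false]` starting right after the
comma at position `j` gives a rotation of the straight reading. -/
lemma cycRead_comma (a : ℕ) (rest : List ℕ) (u : List Bool) (hlen : u.length = rest.length)
    (j : ℕ) (hj : j < u.length + 1) (hfalse : (u ++ [false])[j]? = some false) :
    cycRead (a :: rest) (u ++ [false]) (j + 1)
      = (mergeP a (u.zip rest)).rotate (((u ++ [false]).take (j+1)).count false) := by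
  rcases Nat.lt_or_ge j u.length with hju | hju
  · -- j < u.length : interior comma
    have hju' : u[j]? = some false := by
      rwa [List.getElem?_append_left hju] at hfalse
    have hj' : j < rest.length := hlen ▸ hju
    set u₁ := u.take j with hu₁
    set u₂ := u.drop (j+1) with hu₂
    set r₁ := rest.take j with hr₁
    set b := rest.get ⟨j, hj'⟩ with hb
    set r₂ := rest.drop (j+1) with hr₂
    have hu1len : u₁.length = j := by simp [hu₁, Nat.le_of_lt hju]
    have hr1len : r₁.length = j := by simp [hr₁, Nat.le_of_lt hj']
    have hu2len : u₂.length = u.length - (j+1) := by simp [hu₂]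
    have hr2len : r₂.length = rest.length - (j+1) := by simp [hr₂]
    have hudec : u = u₁ ++ false :: u₂ := by
      have h1 := List.take_append_drop j u
      have h2 : u.drop j = false :: u₂ := by
        rw [List.drop_eq_getElem_cons hju]
        congr 1
        have := List.getElem?_eq_getElem hju
        rw [this] at hju'
        exact Option.some.inj hju'
      rw [← h1, h2]
    have hrdec : rest = r₁ ++ b :: r₂ := by
      have h1 := List.take_append_drop j rest
      have h2 : rest.drop j = b :: r₂ := by rw [List.drop_eq_getElem_cons hj']; rfl
      rw [← h1, h2]
    set A := mergeP a (u₁.zip r₁) with hA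
    set B := mergeP b (u₂.zip r₂) with hB
    have hX : mergeP a (u.zip rest) = A ++ B := by
      rw [hudec, hrdec, List.zip_append (by rw [hu1len, hr1len])]
      show mergeP a (u₁.zip r₁ ++ (false, b) :: u₂.zip r₂) = _
      rw [mergeP_append]
    have hKrot : (a :: rest).rotate (j+1) = (b :: r₂) ++ (a :: r₁) := by
      have : a :: rest = (a :: r₁) ++ (b :: r₂) := by rw [hrdec]; simp
      rw [this, show j + 1 = (a :: r₁).length by simp [hr1len], rotate_append_len]
    have hsrot : (u ++ [false]).rotate (j+1) = (u₂ ++ [false]) ++ (u₁ ++ [false]) := by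
      have : u ++ [false] = (u₁ ++ [false]) ++ (u₂ ++ [false]) := by rw [hudec]; simp
      rw [this, show j + 1 = (u₁ ++ [false]).length by simp [hu1len], rotate_append_len]
    have hread : cycRead (a :: rest) (u ++ [false]) (j + 1) = B ++ A := by
      rw [cycRead, hKrot, hsrot]
      show mergeP b ((((u₂ ++ [false]) ++ (u₁ ++ [false])).zip (r₂ ++ a :: r₁))) = B ++ A
      have hre : (u₂ ++ [false]) ++ (u₁ ++ [false]) = (u₂ ++ false :: u₁) ++ [false] := by simp
      rw [hre, zip_trunc (by simp [hu2len, hr2len, hu1len, hr1len]; omega),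
        List.zip_append (by rw [hu2len, hr2len, hlen]),
        show ((false :: u₁).zip (a :: r₁)) = (false, a) :: u₁.zip r₁ from rfl,
        mergeP_append]
    have htake : ((u ++ [false]).take (j+1)) = u₁ ++ [false] := by
      rw [hudec]
      rw [show (u₁ ++ false :: u₂) ++ [false] = (u₁ ++ [false]) ++ (u₂ ++ [false]) by simp,
        show j + 1 = (u₁ ++ [false]).length by simp [hu1len], List.take_left]
    have hAlen : A.length = (u₁ ++ [false]).count false := by
      rw [hA, mergeP_length, countP_fst_zip _ _ (le_of_eq (by rw [hu1len, hr1len]))]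
      simp [List.count_append]
    rw [hread, hX, htake, ← hAlen, rotate_append_len]
  · -- j = u.length : the final comma
    have hjeq : j = u.length := by omega
    subst hjeq
    have hlen2 : (u ++ [false]).length = (a :: rest).length := by simp [hlen]
    have htake : (u ++ [false]).take (u.length + 1) = u ++ [false] := by
      apply List.take_of_length_le; simp
    have hrotK : (a :: rest).rotate (u.length + 1) = a :: rest := by
      rw [← hlen2, show (u ++ [false]).length = u.length + 1 by simp] at *
      have := List.rotate_length (a :: rest)
      rwa [show (a :: rest).length = u.length + 1 by simp [← hlen]] at this
    have hrots : (u ++ [false]).rotate (u.length + 1) = u ++ [false] := by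
      have := List.rotate_length (u ++ [false])
      rwa [show (u ++ [false]).length = u.length + 1 by simp] at this
    rw [cycRead, hrotK, hrots, htake]
    show mergeP a ((u ++ [false]).zip rest) = _
    rw [zip_trunc hlen]
    have hXlen : (mergeP a (u.zip rest)).length = (u ++ [false]).count false := by
      rw [mergeP_length, countP_fst_zip _ _ (le_of_eq hlen)]
      simp [List.count_append]
    rw [← hXlen, List.rotate_length]

lemma sum_Icc_one {M : Type*} [AddCommMonoid M] (c : ℕ) (f : ℕ → M) :
    ∑ i ∈ Finset.Icc 1 c, f i = ∑ d ∈ Finset.range c, f (d+1) := by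
  induction c with
  | zero => simp
  | succ n ih => rw [Finset.sum_Icc_succ_top (by omega), ih, Finset.sum_range_succ]

lemma mod_shift (len a x : ℕ) (h0 : 0 < len) (hx : x < len) :
    (x + a + (len - a % len)) % len = x := by
  have hlt : a % len < len := Nat.mod_lt _ h0
  have hq := Nat.div_add_mod a len
  have h1 : x + a + (len - a % len) = x + len * (a / len + 1) := by
    rw [Nat.mul_add, Nat.mul_one]
    omega
  rw [h1, Nat.add_mul_mod_self_left, Nat.mod_eq_of_lt hx]

lemma cycRead_rotate (K : List ℕ) (s : List Bool) (a j : ℕ) :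
    cycRead (K.rotate a) (s.rotate a) j = cycRead K s (a + j) := by
  rw [cycRead, cycRead, List.rotate_rotate, List.rotate_rotate]

lemma cycRead_mod_congr (K : List ℕ) (s : List Bool) (hlen : s.length = K.length)
    {n n' : ℕ} (h : n % K.length = n' % K.length) : cycRead K s n = cycRead K s n' := by
  have hK : K.rotate n = K.rotate n' := by rw [← List.rotate_mod K n, h, List.rotate_mod]
  have hs : s.rotate n = s.rotate n' := by
    rw [← List.rotate_mod s n, hlen, h, ← hlen, List.rotate_mod]
  rw [cycRead, cycRead, hK, hs]

lemma cycMerge_eq (K : List ℕ) (s : List Bool) :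
    cycMerge K s = cycRead K s (s.idxOf false + 1) := by
  unfold cycMerge cycRead readP
  cases h : K.rotate (s.idxOf false + 1) <;> simp [h]


lemma per_l (K : List ℕ) (l : List Bool) (hK : K ≠ []) (hlen : l.length = K.length)
    (hc : 0 < l.count false) :
    (∑ j ∈ Finset.range K.length,
        if l[j]? = some false then Finsupp.single (cycRead K l (j+1)) (1:ℚ) else 0)
      = ∑ i ∈ Finset.Icc 1 (l.count false),
          Finsupp.single ((cycMerge K l).rotate i) (1:ℚ) := by
  have hr : 0 < K.length := List.length_pos_iff.mpr hK
  have hll : 0 < l.length := hlen ▸ hr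
  have hmem : false ∈ l := List.count_pos_iff.mp hc
  have hplt : l.idxOf false < l.length := List.idxOf_lt_length_iff.mpr hmem
  set a := l.idxOf false + 1 with ha
  set l' := l.rotate a with hl'def
  set K' := K.rotate a with hK'def
  have hl'len : l'.length = l.length := List.length_rotate l a
  have hK'len : K'.length = K.length := List.length_rotate K a
  have hl'ne : l' ≠ [] := by
    intro h; rw [h] at hl'len; simp at hl'len; omega
  have hlast : l'[l.length - 1]? = some false := by
    rw [hl'def, List.getElem?_rotate (by omega)]
    have heq : (l.length - 1 + a) % l.length = l.idxOf false := by
      have h1 : l.length - 1 + a = l.idxOf false + l.length := by omega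
      rw [h1, Nat.add_mod_right, Nat.mod_eq_of_lt hplt]
    rw [heq]
    exact List.getElem?_idxOf hmem
  set u := l'.dropLast with hu
  have hDL : u ++ [l'.getLast hl'ne] = l' := List.dropLast_append_getLast hl'ne
  have hulen : u.length = l.length - 1 := by rw [hu, List.length_dropLast, hl'len]
  have hg : l'.getLast hl'ne = false := by
    have h1 := List.getElem?_concat_length (l := u) (a := l'.getLast hl'ne)
    rw [hDL, hulen] at h1
    exact Option.some.inj (h1.symm.trans hlast)
  have hdecomp : l' = u ++ [false] := by rw [← hg]; exact hDL.symm
  obtain ⟨a₀, rest, hKcons⟩ : ∃ a₀ rest, K' = a₀ :: rest := by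
    cases hK'' : K' with
    | nil => rw [hK''] at hK'len; simp at hK'len; omega
    | cons x xs => exact ⟨x, xs, rfl⟩
  have hrestlen : rest.length = l.length - 1 := by
    have h2 : K'.length = rest.length + 1 := by rw [hKcons]; simp
    omega
  have hurest : u.length = rest.length := by omega
  set X := mergeP a₀ (u.zip rest) with hX
  have hmerge : cycMerge K l = X := by
    rw [cycMerge_eq]
    have h3 : cycRead K l a = readP K' l' := by
      rw [cycRead, ← hK'def, ← hl'def]
    rw [h3, hKcons, hdecomp]
    show mergeP a₀ ((u ++ [false]).zip rest) = X
    rw [zip_trunc hurest]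
  have hre : (∑ j' ∈ Finset.range K.length,
        if l'[j']? = some false then Finsupp.single (cycRead K' l' (j'+1)) (1:ℚ) else 0)
      = ∑ j ∈ Finset.range K.length,
        if l[j]? = some false then Finsupp.single (cycRead K l (j+1)) (1:ℚ) else 0 := by
    refine Finset.sum_nbij' (fun j' => (j' + a) % K.length)
      (fun j => (j + (K.length - a % K.length)) % K.length) ?_ ?_ ?_ ?_ ?_
    · intro x hx
      exact Finset.mem_range.mpr (Nat.mod_lt _ hr)
    · intro x hx
      exact Finset.mem_range.mpr (Nat.mod_lt _ hr)
    · intro x hx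
      rw [Nat.mod_add_mod]
      exact mod_shift _ _ _ hr (Finset.mem_range.mp hx)
    · intro x hx
      rw [Nat.mod_add_mod, show x + (K.length - a % K.length) + a
          = x + a + (K.length - a % K.length) by omega]
      exact mod_shift _ _ _ hr (Finset.mem_range.mp hx)
    · intro j' hj'
      have hj'lt : j' < K.length := Finset.mem_range.mp hj'
      have hcond : l[(j' + a) % K.length]? = l'[j']? := by
        rw [hl'def, List.getElem?_rotate (by omega), hlen]
      have hval : cycRead K l ((j' + a) % K.length + 1) = cycRead K' l' (j' + 1) := by
        rw [hK'def, hl'def, cycRead_rotate]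
        refine cycRead_mod_congr K l hlen ?_
        rw [Nat.mod_add_mod]
        congr 1
        omega
      rw [hcond, hval]
  rw [← hre]
  have hlen' : K.length = (u ++ [false]).length := by simp; omega
  have hstep : (∑ j' ∈ Finset.range K.length,
        if l'[j']? = some false then Finsupp.single (cycRead K' l' (j'+1)) (1:ℚ) else 0)
      = ∑ j' ∈ Finset.range (u ++ [false]).length,
        if (u ++ [false])[j']? = some false then
          (fun d => Finsupp.single (X.rotate d) (1:ℚ)) (((u ++ [false]).take (j'+1)).count false)
        else 0 := by
    rw [hlen']
    refine Finset.sum_congr rfl ?_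
    intro j' hj'
    have hj'lt : j' < u.length + 1 := by
      have := Finset.mem_range.mp hj'
      simpa using this
    rw [hdecomp, hKcons]
    split_ifs with h
    · rw [cycRead_comma a₀ rest u hurest j' hj'lt h]
    · rfl
  rw [hstep, sumH (u ++ [false]) (fun d => Finsupp.single (X.rotate d) (1:ℚ))]
  have hcount : (u ++ [false]).count false = l.count false := by
    rw [← hdecomp, hl'def]
    exact count_rotate l a false
  rw [hcount, sum_Icc_one, hmerge]


lemma eq_append_false (L : List Bool) (hne : L ≠ []) (h : L[L.length - 1]? = some false) :
    L = L.dropLast ++ [false] := by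
  have hDL : L.dropLast ++ [L.getLast hne] = L := List.dropLast_append_getLast hne
  have h1 := List.getElem?_concat_length (l := L.dropLast) (a := L.getLast hne)
  rw [hDL, List.length_dropLast] at h1
  have hg : L.getLast hne = false := Option.some.inj (h1.symm.trans h)
  rw [← hg]
  exact hDL.symm

noncomputable def BL (n : ℕ) : Finset (List Bool) :=
  Finset.univ.image (List.ofFn (α := Bool) (n := n))

lemma sum_BL {M : Type*} [AddCommMonoid M] (n : ℕ) (g : List Bool → M) :
    (∑ s : Fin n → Bool, g (List.ofFn s)) = ∑ l ∈ BL n, g l :=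
  (Finset.sum_image (fun _ _ _ _ h => List.ofFn_injective h)).symm

lemma mem_BL {n : ℕ} {l : List Bool} : l ∈ BL n ↔ l.length = n := by
  constructor
  · intro h
    obtain ⟨s, -, rfl⟩ := Finset.mem_image.mp h
    simp
  · intro h
    refine Finset.mem_image.mpr ⟨fun i => l.get (Fin.cast h.symm i), Finset.mem_univ _, ?_⟩
    subst h
    exact List.ofFn_get l


lemma Ssum_eq (K : List ℕ) (m : ℕ) (f : List ℕ → RSp) :
    Ssum K m f = ∑ s : Fin K.length → Bool,
      if (List.ofFn s).count true = m then f (cycMerge K (List.ofFn s)) else 0 := by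
  have h0 : Ssum K m f = Finsupp.linearCombination ℚ f (SmDef K m) :=
    (Finsupp.linearCombination_apply (v := f) ℚ (SmDef K m)).symm
  rw [h0, SmDef, map_sum]
  refine Finset.sum_congr rfl fun s _ => ?_
  split_ifs with h
  · rw [Finsupp.linearCombination_single ℚ (v := f), one_smul]
  · exact map_zero _

/-- **Lemma 6.3** of Hirose–Murahara–Ono: for a nonempty index `𝐤 = (k₁,…,k_r)` and
`0 ≤ m ≤ r−1`,
`Σ_{i=1}^{r−m} Σ_{(l₁,…,l_{r−m}) ∈ S_m(𝐤)} (l_{i+1},…,l_{r−m},l₁,…,l_i)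
 = Σ_{i=1}^{r} Σ_{□ patterns with exactly m plus signs} (k_{i+1}□⋯□k_r□k₁□⋯□k_i)`
holds in `ℛ`. -/
theorem Sm_rotation_sum (K : List ℕ) (hne : K ≠ []) (hpos : ∀ x ∈ K, 0 < x)
    (m : ℕ) (hm : m + 1 ≤ K.length) :
    (∑ i ∈ Finset.Icc 1 (K.length - m),
        Ssum K m fun l => Finsupp.single (l.rotate i) (1 : ℚ))
      = ∑ i ∈ Finset.Icc 1 K.length, mergeM (K.rotate i) m := by
  have hr0 : 0 < K.length := List.length_pos_iff.mpr hne
  have hL : (∑ i ∈ Finset.Icc 1 (K.length - m),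
        Ssum K m fun l => Finsupp.single (l.rotate i) (1 : ℚ))
      = ∑ l ∈ BL K.length, if l.count true = m then
          (∑ j ∈ Finset.range K.length,
            if l[j]? = some false then Finsupp.single (cycRead K l (j+1)) (1:ℚ) else 0)
          else 0 := by
    have h1 : ∀ i : ℕ, (Ssum K m fun l => Finsupp.single (l.rotate i) (1 : ℚ))
        = ∑ l ∈ BL K.length,
            if l.count true = m then Finsupp.single ((cycMerge K l).rotate i) (1:ℚ) else 0 := by
      intro i
      rw [Ssum_eq]
      exact sum_BL K.length (fun l => if l.count true = m then
        Finsupp.single ((cycMerge K l).rotate i) (1:ℚ) else 0)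
    calc (∑ i ∈ Finset.Icc 1 (K.length - m),
            Ssum K m fun l => Finsupp.single (l.rotate i) (1 : ℚ))
        = ∑ i ∈ Finset.Icc 1 (K.length - m), ∑ l ∈ BL K.length,
            if l.count true = m then Finsupp.single ((cycMerge K l).rotate i) (1:ℚ) else 0 :=
          Finset.sum_congr rfl fun i _ => h1 i
      _ = ∑ l ∈ BL K.length, ∑ i ∈ Finset.Icc 1 (K.length - m),
            if l.count true = m then Finsupp.single ((cycMerge K l).rotate i) (1:ℚ) else 0 :=
          Finset.sum_comm
      _ = _ := by
          refine Finset.sum_congr rfl fun l hl => ?_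
          by_cases hP : l.count true = m
          · simp only [if_pos hP]
            have hlen : l.length = K.length := mem_BL.mp hl
            have hcf : l.count false = K.length - m := by
              have := count_false_add_count_true l
              omega
            have hc0 : 0 < l.count false := by omega
            rw [← hcf]
            exact (per_l K l hne hlen hc0).symm
          · simp only [if_neg hP, Finset.sum_const_zero]
  rw [hL]
  rw [sum_Icc_one K.length (fun i => mergeM (K.rotate i) m)]
  have hR : ∀ j ∈ Finset.range K.length, mergeM (K.rotate (j+1)) m
      = ∑ l ∈ BL K.length,
          if l.count true = m ∧ l[j]? = some false
          then Finsupp.single (cycRead K l (j+1)) (1:ℚ) else 0 := by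
    intro j hj
    have hjr : j < K.length := Finset.mem_range.mp hj
    obtain ⟨a₀, rest, hrot⟩ : ∃ a₀ rest, K.rotate (j+1) = a₀ :: rest := by
      cases hh : K.rotate (j+1) with
      | nil =>
        exfalso
        have h2 := List.length_rotate K (j+1)
        rw [hh] at h2
        simp at h2
        omega
      | cons x xs => exact ⟨x, xs, rfl⟩
    have hrl : rest.length = K.length - 1 := by
      have h2 := List.length_rotate K (j+1)
      rw [hrot] at h2
      simp at h2
      omega
    rw [hrot]
    show (∑ s : Fin rest.length → Bool,
        if (List.ofFn s).count true = m then
          Finsupp.single (mergeP a₀ ((List.ofFn s).zip rest)) (1 : ℚ) else 0) = _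
    rw [sum_BL rest.length (fun t => if t.count true = m then
      Finsupp.single (mergeP a₀ (t.zip rest)) (1:ℚ) else 0)]
    rw [← Finset.sum_filter, ← Finset.sum_filter]
    refine Finset.sum_nbij' (fun t => (t ++ [false]).rotate (K.length - (j+1)))
      (fun l => (l.rotate (j+1)).take (K.length - 1)) ?_ ?_ ?_ ?_ ?_
    · -- maps into target filter
      intro t ht
      obtain ⟨htBL, htc⟩ := Finset.mem_filter.mp ht
      have htl : t.length = rest.length := mem_BL.mp htBL
      have hlen2 : (t ++ [false]).length = K.length := by simp [htl, hrl]; omega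
      refine Finset.mem_filter.mpr ⟨mem_BL.mpr (by rw [List.length_rotate, hlen2]), ?_, ?_⟩
      · rw [count_rotate, List.count_append]
        simpa using htc
      · rw [List.getElem?_rotate (by rw [hlen2]; exact hjr), hlen2,
          show j + (K.length - (j+1)) = K.length - 1 by omega,
          Nat.mod_eq_of_lt (by omega),
          show K.length - 1 = t.length by omega]
        exact List.getElem?_concat_length (l := t) (a := false)
    · -- reverse map into source filter
      intro l hl
      obtain ⟨hlBL, hlc, hlq⟩ := Finset.mem_filter.mp hl
      have hll : l.length = K.length := mem_BL.mp hlBL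
      have hrotlen : (l.rotate (j+1)).length = K.length := by rw [List.length_rotate, hll]
      have hne2 : l.rotate (j+1) ≠ [] := by
        intro h; rw [h] at hrotlen; simp at hrotlen; omega
      have hgets : (l.rotate (j+1))[(l.rotate (j+1)).length - 1]? = some false := by
        rw [hrotlen, List.getElem?_rotate (by omega),
          show K.length - 1 + (j+1) = K.length + j by omega, hll,
          Nat.add_mod_left, Nat.mod_eq_of_lt hjr]
        exact hlq
      have key : l.rotate (j+1) = (l.rotate (j+1)).take (K.length - 1) ++ [false] := by
        have h5 := eq_append_false _ hne2 hgets
        rwa [List.dropLast_eq_take, hrotlen] at h5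
      refine Finset.mem_filter.mpr ⟨mem_BL.mpr (by simp [hrotlen, hrl]), ?_⟩
      have hcnt : (l.rotate (j+1)).count true
          = ((l.rotate (j+1)).take (K.length - 1)).count true := by
        conv_lhs => rw [key]
        simp [List.count_append]
      rw [← hcnt, count_rotate]
      exact hlc
    · -- left inverse
      intro t ht
      obtain ⟨htBL, -⟩ := Finset.mem_filter.mp ht
      have htl : t.length = rest.length := mem_BL.mp htBL
      have hlen2 : (t ++ [false]).length = K.length := by simp [htl, hrl]; omega
      rw [List.rotate_rotate, show K.length - (j+1) + (j+1) = K.length by omega,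
        ← hlen2, List.rotate_length, show (t ++ [false]).length - 1 = t.length by simp,
        List.take_left]
    · -- right inverse
      intro l hl
      obtain ⟨hlBL, hlc, hlq⟩ := Finset.mem_filter.mp hl
      have hll : l.length = K.length := mem_BL.mp hlBL
      have hrotlen : (l.rotate (j+1)).length = K.length := by rw [List.length_rotate, hll]
      have hne2 : l.rotate (j+1) ≠ [] := by
        intro h; rw [h] at hrotlen; simp at hrotlen; omega
      have hgets : (l.rotate (j+1))[(l.rotate (j+1)).length - 1]? = some false := by
        rw [hrotlen, List.getElem?_rotate (by omega),
          show K.length - 1 + (j+1) = K.length + j by omega, hll,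
          Nat.add_mod_left, Nat.mod_eq_of_lt hjr]
        exact hlq
      have key : l.rotate (j+1) = (l.rotate (j+1)).take (K.length - 1) ++ [false] := by
        have h5 := eq_append_false _ hne2 hgets
        rwa [List.dropLast_eq_take, hrotlen] at h5
      rw [← key, List.rotate_rotate, show j + 1 + (K.length - (j+1)) = K.length by omega,
        ← hll, List.rotate_length]
    · -- values agree
      intro t ht
      obtain ⟨htBL, -⟩ := Finset.mem_filter.mp ht
      have htl : t.length = rest.length := mem_BL.mp htBL
      have hlen2 : (t ++ [false]).length = K.length := by simp [htl, hrl]; omega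
      have hrr : ((t ++ [false]).rotate (K.length - (j+1))).rotate (j+1) = t ++ [false] := by
        rw [List.rotate_rotate, show K.length - (j+1) + (j+1) = K.length by omega,
          ← hlen2, List.rotate_length]
      rw [cycRead, hrr, hrot]
      show Finsupp.single (mergeP a₀ (t.zip rest)) (1:ℚ)
        = Finsupp.single (mergeP a₀ ((t ++ [false]).zip rest)) (1:ℚ)
      rw [zip_trunc htl]
  calc (∑ l ∈ BL K.length, if l.count true = m then
          (∑ j ∈ Finset.range K.length,
            if l[j]? = some false then Finsupp.single (cycRead K l (j+1)) (1:ℚ) else 0)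
          else 0)
      = ∑ l ∈ BL K.length, ∑ j ∈ Finset.range K.length,
          if l.count true = m ∧ l[j]? = some false
          then Finsupp.single (cycRead K l (j+1)) (1:ℚ) else 0 := by
        refine Finset.sum_congr rfl fun l hl => ?_
        by_cases hP : l.count true = m
        · rw [if_pos hP]
          refine Finset.sum_congr rfl fun j hj => ?_
          by_cases hQ : l[j]? = some false
          · rw [if_pos hQ, if_pos ⟨hP, hQ⟩]
          · rw [if_neg hQ, if_neg (fun h => hQ h.2)]
        · rw [if_neg hP]
          exact (Finset.sum_eq_zero fun j hj => if_neg (fun h => hP h.1)).symm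
    _ = ∑ j ∈ Finset.range K.length, ∑ l ∈ BL K.length,
          if l.count true = m ∧ l[j]? = some false
          then Finsupp.single (cycRead K l (j+1)) (1:ℚ) else 0 := Finset.sum_comm
    _ = ∑ j ∈ Finset.range K.length, mergeM (K.rotate (j+1)) m :=
        (Finset.sum_congr rfl hR).symm
end

section
/- For every positive integer k, the following identity holds in 𝔥[[t]]: Σ_{l',l'' ≥ 0} binom(k+l''−1, l'') · (y·x^{k+l''−1}·y·x^{l'}) · t^{l'+l''} = Σ_{l ≥ 0} y·( (x^{k−1}y) ⧢ x^{l} ) · t^{l}. -/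
/-- `𝔥 = ℚ⟨x,y⟩`, realized as the monoid algebra over `ℚ` of the free monoid on two
letters; letter `0` is `x` and letter `1` is `y`. -/
abbrev H : Type := MonoidAlgebra ℚ (FreeMonoid (Fin 2))

/-- The word `u₁⋯uₙ`, as an element of `𝔥`. -/
noncomputable def word (l : List (Fin 2)) : H := MonoidAlgebra.single (FreeMonoid.ofList l) 1

/-- The letter `x ∈ 𝔥`. -/
noncomputable def xH : H := word [0]

/-- The letter `y ∈ 𝔥`. -/
noncomputable def yH : H := word [1]

/-- The shuffle product of two words, as an element of `𝔥`. -/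
noncomputable def shw : List (Fin 2) → List (Fin 2) → H
  | [], w => word w
  | a :: u, [] => word (a :: u)
  | a :: u, b :: v => word [a] * shw u (b :: v) + word [b] * shw (a :: u) v
  termination_by u v => u.length + v.length

/-- The shuffle product `⧢` on `𝔥`: the `ℚ`-bilinear extension of the shuffle product
of words. -/
noncomputable def sh (f g : H) : H :=
  Finsupp.sum f.coeff fun u c => Finsupp.sum g.coeff fun v d => (c * d) • shw u.toList v.toList

lemma word_mul (u v : List (Fin 2)) : word u * word v = word (u ++ v) := by
  simp [word, MonoidAlgebra.single_mul_single]

lemma shw_key (m n : ℕ) :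
    shw (List.replicate m 0 ++ [1]) (List.replicate n 0)
      = ∑ i ∈ Finset.range (n+1), ((m+i).choose i : ℚ) •
          word (List.replicate (m+i) 0 ++ 1 :: List.replicate (n-i) 0) := by
  induction n generalizing m with
  | zero =>
      cases m with
      | zero => simp [shw]
      | succ m => simp [shw, List.replicate_succ]
  | succ n ihn =>
      induction m with
      | zero =>
          rw [show (List.replicate 0 (0:Fin 2) ++ [1]) = [1] from rfl,
            List.replicate_succ]
          simp only [shw]
          rw [show shw [1] (List.replicate n 0) = shw (List.replicate 0 0 ++ [1]) (List.replicate n 0) from rfl,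
            ihn 0, Finset.mul_sum, Finset.sum_range_succ' _ (n+1)]
          simp only [zero_add, Nat.choose_self, Nat.cast_one, one_smul,
            mul_smul_comm, word_mul, List.replicate_succ, List.cons_append,
            List.nil_append, Nat.succ_sub_succ]
          rw [add_comm]
          simp [List.replicate_succ]
      | succ m ihm =>
          rw [show List.replicate (m+1) (0:Fin 2) ++ [1] = 0 :: (List.replicate m 0 ++ [1]) from by simp [List.replicate_succ],
            show List.replicate (n+1) (0:Fin 2) = 0 :: List.replicate n 0 from rfl]
          simp only [shw]
          rw [show (0 :: List.replicate n (0:Fin 2)) = List.replicate (n+1) 0 from rfl,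
            show (0 :: (List.replicate m (0:Fin 2) ++ [1])) = List.replicate (m+1) 0 ++ [1] from by simp [List.replicate_succ],
            ihm, ihn (m+1), Finset.mul_sum, Finset.mul_sum,
            Finset.sum_range_succ' _ (n+1), Finset.sum_range_succ' (fun i => ((m+1+i).choose i : ℚ) •
          word (List.replicate (m+1+i) 0 ++ 1 :: List.replicate (n+1-i) 0)) (n+1)]
          have key : (∑ i ∈ Finset.range (n+1),
                word [0] * ((m + 1 + i).choose i : ℚ) •
                  word (List.replicate (m + 1 + i) 0 ++ 1 :: List.replicate (n - i) 0))
              + (∑ i ∈ Finset.range (n+1),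
                word [0] * ((m + (i + 1)).choose (i + 1) : ℚ) •
                  word (List.replicate (m + (i + 1)) 0 ++ 1 :: List.replicate (n + 1 - (i + 1)) 0))
              = ∑ i ∈ Finset.range (n+1),
                ((m + 1 + (i + 1)).choose (i + 1) : ℚ) •
                  word (List.replicate (m + 1 + (i + 1)) 0 ++ 1 :: List.replicate (n + 1 - (i + 1)) 0) := by
            rw [← Finset.sum_add_distrib]
            refine Finset.sum_congr rfl fun i _ => ?_
            have h : (m + 1 + (i + 1)).choose (i + 1)
                = (m + 1 + i).choose i + (m + (i + 1)).choose (i + 1) := by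
              rw [show m + 1 + (i + 1) = (m + 1 + i) + 1 by ring, Nat.choose_succ_succ]
              congr 2
              omega
            have l1 : (0 : Fin 2) :: (List.replicate (m + 1 + i) 0 ++ 1 :: List.replicate (n - i) 0)
                = List.replicate (m + 1 + (i + 1)) 0 ++ 1 :: List.replicate (n + 1 - (i + 1)) 0 := by
              rw [show m + 1 + (i + 1) = (m + 1 + i) + 1 from by omega, List.replicate_succ,
                show n + 1 - (i + 1) = n - i from by omega, List.cons_append]
            have l2 : (0 : Fin 2) :: (List.replicate (m + (i + 1)) 0 ++ 1 :: List.replicate (n + 1 - (i + 1)) 0)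
                = List.replicate (m + 1 + (i + 1)) 0 ++ 1 :: List.replicate (n + 1 - (i + 1)) 0 := by
              rw [show m + 1 + (i + 1) = (m + (i + 1)) + 1 from by omega, List.replicate_succ,
                List.cons_append]
            rw [mul_smul_comm, mul_smul_comm, word_mul, word_mul]
            simp only [List.singleton_append]
            rw [l1, l2, h, Nat.cast_add, add_smul]
          conv_lhs => rw [add_comm, ← add_assoc]
          rw [key]
          have tT : word [0] * ((m + 0).choose 0 : ℚ) •
                word (List.replicate (m + 0) 0 ++ 1 :: List.replicate (n + 1 - 0) 0)
              = ((m + 1 + 0).choose 0 : ℚ) •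
                word (List.replicate (m + 1 + 0) 0 ++ 1 :: List.replicate (n + 1 - 0) 0) := by
            simp [mul_smul_comm, word_mul, List.replicate_succ]
          rw [tT, add_comm]

lemma xH_pow (m : ℕ) : xH ^ m = word (List.replicate m 0) := by
  induction m with
  | zero => rfl
  | succ m ih =>
      rw [pow_succ, ih, xH, word_mul, ← List.replicate_succ']

lemma sh_word (u v : List (Fin 2)) : sh (word u) (word v) = shw u v := by
  simp [sh, word, Finsupp.sum_single_index]

/-- **Equation (5.3)** of Hirose–Murahara–Ono: for a positive integer `k`, the identity
`Σ_{l',l'' ≥ 0} binom(k+l''−1,l'')·(y·x^{k+l''−1}·y·x^{l'})·t^{l'+l''}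
 = Σ_{l ≥ 0} y·((x^{k−1}y) ⧢ x^l)·t^l`
holds in `𝔥[[t]]`. -/
theorem key_id2 (k : ℕ) (hk : 0 < k) :
    (PowerSeries.mk fun n : ℕ => ∑ p ∈ Finset.HasAntidiagonal.antidiagonal n,
        ((k + p.2 - 1).choose p.2 : ℚ) • (yH * xH ^ (k + p.2 - 1) * yH * xH ^ p.1))
      = PowerSeries.mk fun l : ℕ => yH * sh (xH ^ (k - 1) * yH) (xH ^ l) := by
  obtain ⟨m, rfl⟩ : ∃ m, k = m + 1 := ⟨k - 1, by omega⟩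
  refine PowerSeries.ext fun n => ?_
  simp only [PowerSeries.coeff_mk]
  have hx : xH ^ (m + 1 - 1) * yH = word (List.replicate m 0 ++ [1]) := by
    rw [Nat.add_sub_cancel, xH_pow, yH, word_mul]
  rw [hx, xH_pow n, sh_word, shw_key, Finset.mul_sum,
    Finset.Nat.sum_antidiagonal_eq_sum_range_succ_mk, ← Finset.sum_range_reflect]
  refine Finset.sum_congr rfl fun i hi => ?_
  rw [Finset.mem_range] at hi
  rw [show n + 1 - 1 - i = n - i from by omega, show n - (n - i) = i from by omega,
    show m + 1 + i - 1 = m + i from by omega]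
  rw [mul_smul_comm]
  congr 1
  rw [yH, xH_pow, xH_pow, word_mul, word_mul, word_mul, word_mul]
  congr 1
  simp
end

section
/- Let r ≤ k be positive integers and let α ⊆ I(k,r) be a cyclic equivalence class of indices of depth r and weight k. Define C := Σ_{(k₁,…,k_r)∈α} Σ_{a+b=k_r−1, a≥0, b≥1} F(1+a, k₁,…,k_{r−1}, 1+b). Then C = (−1)^{k+1} Σ_{𝐥=(l₁,…,l_r) ∈ ℤ_{≥0}^r} ũ⋆_CSF(α;𝐥)·t^{l₁+⋯+l_r} + Σ_{(k₁,…,k_r)∈α} Σ_{l=0}^{∞} F(1+l, k₁,…,k_r)·t^l − Σ_{(k₁,…,k_r)∈α} F(k₁,…,k_r, 1) in 𝔥[[t]]. -/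
open Classical in
/-- `W(X) = Σ_f δ(f⁻¹(1))·δ(f⁻¹(2))⋯δ(f⁻¹(n)) ∈ 𝔥`, the sum ranging over all
order-preserving bijections `f : X → {1,…,n}`, `n = #X`. -/
noncomputable def Wp (α : Type) [Fintype α] [PartialOrder α] (δ : α → Fin 2) : H :=
  ∑ f : α ≃ Fin (Fintype.card α),
    if Monotone (⇑f) then word (List.ofFn fun i => δ (f.symm i)) else 0

/-- The underlying set of the labeled poset `X⋆(𝐤)`: the disjoint union of the chains
`C_j = {c_{j,0} < ⋯ < c_{j,k_j−1}}`, `1 ≤ j ≤ r`. -/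
def Carrier (K : List ℕ) : Type := (j : Fin K.length) × Fin (K.get j)

instance (K : List ℕ) : Fintype (Carrier K) :=
  inferInstanceAs (Fintype ((j : Fin K.length) × Fin (K.get j)))

instance (K : List ℕ) : DecidableEq (Carrier K) :=
  inferInstanceAs (DecidableEq ((j : Fin K.length) × Fin (K.get j)))

/-- The partial order of `X⋆(𝐤)`: the order generated by the chain relations together
with the relations `c_{j+1,k_{j+1}−1} > c_{j,0}` (written out explicitly: one can jump
from the bottom of a chain to the top of a later chain provided all intermediate chains
are singletons). -/
def cle (K : List ℕ) (p q : (j : Fin K.length) × Fin (K.get j)) : Prop :=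
  (p.1 = q.1 ∧ p.2.val ≤ q.2.val) ∨
    (p.1 < q.1 ∧ p.2.val = 0 ∧ q.2.val + 1 = K.get q.1 ∧
      ∀ m : Fin K.length, p.1 < m → m < q.1 → K.get m = 1)

theorem sigEq {K : List ℕ} (p q : (j : Fin K.length) × Fin (K.get j))
    (h1 : p.1 = q.1) (h2 : p.2.val = q.2.val) : p = q := by
  obtain ⟨j, a⟩ := p
  obtain ⟨j', b⟩ := q
  have h1' : j = j' := h1
  subst h1'
  have h2' : a = b := Fin.ext h2
  rw [h2']

theorem cle_trans (K : List ℕ) (p q s : (j : Fin K.length) × Fin (K.get j))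
    (h : cle K p q) (h' : cle K q s) : cle K p s := by
  rcases h with ⟨h1, h2⟩ | ⟨h1, h2, h3, h4⟩
  · rcases h' with ⟨g1, g2⟩ | ⟨g1, g2, g3, g4⟩
    · exact Or.inl ⟨h1.trans g1, h2.trans g2⟩
    · exact Or.inr ⟨h1.le.trans_lt g1, by omega,
        g3, fun m hm1 hm2 => g4 m (h1.symm.le.trans_lt hm1) hm2⟩
  · rcases h' with ⟨g1, g2⟩ | ⟨g1, g2, g3, g4⟩
    · have hks : K.get q.1 = K.get s.1 := by rw [g1]
      have hlt : s.2.val < K.get s.1 := s.2.isLt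
      exact Or.inr ⟨h1.trans_le g1.le, h2, by omega,
        fun m hm1 hm2 => h4 m hm1 (hm2.trans_le g1.symm.le)⟩
    · refine Or.inr ⟨h1.trans g1, h2, g3, fun m hm1 hm2 => ?_⟩
      rcases lt_trichotomy m q.1 with hc | hc | hc
      · exact h4 m hm1 hc
      · rw [hc]; omega
      · exact g4 m hc hm2

theorem cle_antisymm (K : List ℕ) (p q : (j : Fin K.length) × Fin (K.get j))
    (h : cle K p q) (h' : cle K q p) : p = q := by
  rcases h with ⟨h1, h2⟩ | ⟨h1, h2, h3, h4⟩
  · rcases h' with ⟨g1, g2⟩ | ⟨g1, g2, g3, g4⟩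
    · exact sigEq p q h1 (le_antisymm h2 g2)
    · rw [h1] at g1; exact absurd g1 (lt_irrefl _)
  · rcases h' with ⟨g1, g2⟩ | ⟨g1, g2, g3, g4⟩
    · rw [g1] at h1; exact absurd h1 (lt_irrefl _)
    · exact absurd (h1.trans g1) (lt_irrefl _)

instance (K : List ℕ) : PartialOrder (Carrier K) where
  le := cle K
  le_refl p := Or.inl ⟨rfl, le_refl _⟩
  le_trans := cle_trans K
  le_antisymm := cle_antisymm K

/-- The label map of `X⋆(𝐤)`: the bottom element of each chain is labeled `y` (= `1`),
all other elements are labeled `x` (= `0`). -/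
def lab (K : List ℕ) : Carrier K → Fin 2 := fun p => if p.2.val = 0 then 1 else 0

/-- `w⋆(𝐤) := W(X⋆(𝐤))`, with `w⋆(∅) = 1`. -/
noncomputable def wstar (K : List ℕ) : H := Wp (Carrier K) (lab K)

/-- The coefficientwise shuffle product on `𝔥[[t]]`. -/
noncomputable def shP (f g : PowerSeries H) : PowerSeries H :=
  PowerSeries.mk fun n => ∑ p ∈ Finset.HasAntidiagonal.antidiagonal n,
    sh (PowerSeries.coeff p.1 f) (PowerSeries.coeff p.2 g)

/-- `F(𝐤) = Σ_{l₁,…,l_r ≥ 0} (∏_j (−1)^{k_j} binom(k_j+l_j−1,l_j)) ·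
w⋆(k_r+l_r,…,k₁+l₁) · t^{l₁+⋯+l_r} ∈ 𝔥[[t]]`, with `F(∅) = 1`. -/
noncomputable def Fser (K : List ℕ) : PowerSeries H :=
  PowerSeries.mk fun n => ∑ l ∈ Finset.Nat.antidiagonalTuple K.length n,
    (∏ j : Fin K.length, ((-1 : ℚ) ^ (K.get j) * ((K.get j + l j - 1).choose (l j) : ℚ))) •
      wstar ((List.ofFn fun j : Fin K.length => K.get j + l j).reverse)

/-- `w⋆_Ŝ(𝐤) = Σ_{i=0}^{r} w⋆(k₁,…,k_i) ⧢ F(k_{i+1},…,k_r) ∈ 𝔥[[t]]`. -/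
noncomputable def wstarS (K : List ℕ) : PowerSeries H :=
  ∑ i ∈ Finset.range (K.length + 1),
    shP (PowerSeries.C (wstar (K.take i))) (Fser (K.drop i))

/-- `ũ⋆_CSF(α;𝐥) = Σ_{(k₁,…,k_r)∈α} (∏_{s=1}^r binom(k_s+l_s−1,l_s))
Σ_{j=0}^{k₁+l₁−2} w⋆(j+1, k_r+l_r, …, k₂+l₂, k₁+l₁−j) ∈ 𝔥`, for a cyclic equivalence
class `α` of indices of depth `r` and a tuple `𝐥 ∈ ℤ_{≥0}^r`. -/
noncomputable def uCSF (r : ℕ) (α : Finset (List ℕ)) (l : Fin r → ℕ) : H :=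
  ∑ L ∈ α,
    (∏ s : Fin r, ((L.getD s.val 0 + l s - 1).choose (l s) : ℚ)) •
      ∑ j ∈ Finset.range ((List.ofFn fun s : Fin r => L.getD s.val 0 + l s).headI - 1),
        wstar (((j + 1) :: (List.ofFn fun s : Fin r => L.getD s.val 0 + l s).tail.reverse)
          ++ [(List.ofFn fun s : Fin r => L.getD s.val 0 + l s).headI - j])

section CalcAux

open Finset

/-- Binomial coefficient helper. -/
noncomputable def gq (κ μ : ℕ) : ℚ := if κ ≤ μ then ((μ - 1).choose (μ - κ) : ℚ) else 0

lemma gq_add (κ l : ℕ) : gq κ (κ + l) = ((κ + l - 1).choose l : ℚ) := by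
  unfold gq
  rw [if_pos (Nat.le_add_right _ _)]
  congr 2
  omega

lemma sum_get (K : List ℕ) : ∑ j : Fin K.length, K.get j = K.sum := by
  conv_rhs => rw [← List.ofFn_get K]
  rw [List.sum_ofFn]

lemma reparam {d n : ℕ} (K : Fin d → ℕ) (f : Fin d → ℕ → ℚ) (G : (Fin d → ℕ) → H) :
    ∑ l ∈ Finset.Nat.antidiagonalTuple d n, (∏ j, f j (l j)) • G (fun j => K j + l j)
      = ∑ m ∈ Finset.Nat.antidiagonalTuple d (n + ∑ j, K j),
          (∏ j, if K j ≤ m j then f j (m j - K j) else 0) • G m := by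
  have hinj : ∀ x ∈ Finset.Nat.antidiagonalTuple d n, ∀ y ∈ Finset.Nat.antidiagonalTuple d n,
      (fun l (j : Fin d) => K j + l j) x = (fun l (j : Fin d) => K j + l j) y → x = y := by
    intro x _ y _ h
    funext j
    have := congrFun h j
    simpa using this
  have hsub : (Finset.Nat.antidiagonalTuple d n).image (fun l (j : Fin d) => K j + l j)
      ⊆ Finset.Nat.antidiagonalTuple d (n + ∑ j, K j) := by
    intro m hm
    rw [Finset.mem_image] at hm
    obtain ⟨l, hl, rfl⟩ := hm
    rw [Finset.Nat.mem_antidiagonalTuple] at hl ⊢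
    rw [Finset.sum_add_distrib, hl]
    ring
  rw [← Finset.sum_subset hsub ?hzero]
  · rw [Finset.sum_image hinj]
    refine Finset.sum_congr rfl fun l _ => ?_
    congr 1
    refine Finset.prod_congr rfl fun j _ => ?_
    rw [if_pos (Nat.le_add_right _ _)]
    congr 1
    show l j = K j + l j - K j
    omega
  · intro m hm hnot
    by_cases hall : ∀ j, K j ≤ m j
    · exfalso
      apply hnot
      rw [Finset.mem_image]
      refine ⟨fun j => m j - K j, ?_, ?_⟩
      · rw [Finset.Nat.mem_antidiagonalTuple] at hm ⊢
        have : ∑ j, (K j + (m j - K j)) = ∑ j, m j :=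
          Finset.sum_congr rfl fun j _ => by have := hall j; omega
        rw [Finset.sum_add_distrib] at this
        omega
      · funext j
        have := hall j
        show K j + (m j - K j) = m j
        omega
    · push_neg at hall
      obtain ⟨j, hj⟩ := hall
      rw [show (∏ j : Fin d, if K j ≤ m j then f j (m j - K j) else 0) = 0 from
        Finset.prod_eq_zero (Finset.mem_univ j) (if_neg (by omega)), zero_smul]

lemma sum_adT_congr {d₁ d₂ N₁ N₂ : ℕ} (hd : d₁ = d₂) (hN : N₁ = N₂)
    (F : (Fin d₁ → ℕ) → H) (G : (Fin d₂ → ℕ) → H)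
    (h : ∀ m : Fin d₂ → ℕ, F (fun j => m (Fin.cast hd j)) = G m) :
    ∑ m ∈ Finset.Nat.antidiagonalTuple d₁ N₁, F m
      = ∑ m ∈ Finset.Nat.antidiagonalTuple d₂ N₂, G m := by
  subst hd
  subst hN
  exact Finset.sum_congr rfl fun m _ => h m

lemma coeff_Fser (K : List ℕ) (n : ℕ) :
    PowerSeries.coeff n (Fser K)
      = ((-1 : ℚ) ^ K.sum) • ∑ m ∈ Finset.Nat.antidiagonalTuple K.length (n + K.sum),
          (∏ j : Fin K.length, gq (K.get j) (m j)) • wstar ((List.ofFn m).reverse) := by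
  rw [Fser, PowerSeries.coeff_mk]
  rw [reparam (K := K.get)
    (f := fun j l => ((-1 : ℚ) ^ (K.get j) * ((K.get j + l - 1).choose l : ℚ)))
    (G := fun m => wstar ((List.ofFn m).reverse))]
  rw [sum_get, Finset.smul_sum]
  refine Finset.sum_congr rfl fun m _ => ?_
  rw [smul_smul]
  congr 1
  have : ∀ j : Fin K.length, (if K.get j ≤ m j then
      ((-1 : ℚ) ^ (K.get j) * ((K.get j + (m j - K.get j) - 1).choose (m j - K.get j) : ℚ)) else 0)
      = (-1 : ℚ) ^ (K.get j) * gq (K.get j) (m j) := by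
    intro j
    unfold gq
    by_cases h : K.get j ≤ m j
    · rw [if_pos h, if_pos h]
      congr 3
      omega
    · rw [if_neg h, if_neg h, mul_zero]
  rw [Finset.prod_congr rfl fun j _ => this j, Finset.prod_mul_distrib,
    Finset.prod_pow_eq_pow_sum, sum_get]

end CalcAux
section CalcAux2

open Finset

lemma ofFn_cast {d₁ d₂ : ℕ} (hd : d₁ = d₂) (m : Fin d₂ → ℕ) :
    (List.ofFn fun j : Fin d₁ => m (Fin.cast hd j)) = List.ofFn m := by
  subst hd; rfl

lemma sum_dropLast : ∀ L : List ℕ, L ≠ [] → L.dropLast.sum + L.getLastD 0 = L.sum := by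
  intro L
  induction L with
  | nil => intro h; exact absurd rfl h
  | cons x t ih =>
    intro _
    cases t with
    | nil => simp
    | cons y s =>
      have := ih (by simp)
      simp only [List.dropLast_cons₂, List.sum_cons, List.getLastD_cons] at *
      omega

lemma getLastD_pos : ∀ L : List ℕ, L ≠ [] → (∀ x ∈ L, 0 < x) → 0 < L.getLastD 0 := by
  intro L
  induction L with
  | nil => intro h; exact absurd rfl h
  | cons x t ih =>
    intro _ hpos
    cases t with
    | nil => simpa using hpos x (by simp)
    | cons y s =>
      have := ih (by simp) (fun z hz => hpos z (by simp [hz]))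
      simpa [List.getLastD_cons] using this

lemma dropLast_append_getLastD : ∀ L : List ℕ, L ≠ [] → L.dropLast ++ [L.getLastD 0] = L := by
  intro L
  induction L with
  | nil => intro h; exact absurd rfl h
  | cons x t ih =>
    intro _
    cases t with
    | nil => simp
    | cons y s =>
      have := ih (by simp)
      simp only [List.dropLast_cons₂, List.getLastD_cons] at *
      rw [List.cons_append, this]

lemma prodget (r' u v : ℕ) (M : List ℕ) (hM : M.length = r') (m : Fin (r' + 2) → ℕ)
    (hd : (u :: (M ++ [v])).length = r' + 2) :
    (∏ j : Fin (u :: (M ++ [v])).length, gq ((u :: (M ++ [v])).get j) (m (Fin.cast hd j)))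
      = gq u (m 0) * (∏ i : Fin r', gq (M.getD i 0) (m i.succ.castSucc))
          * gq v (m (Fin.last (r' + 1))) := by
  have key : ∀ j : Fin (u :: (M ++ [v])).length,
      gq ((u :: (M ++ [v])).get j) (m (Fin.cast hd j))
        = (fun i : Fin (r' + 2) => gq ((u :: (M ++ [v])).get (Fin.cast hd.symm i)) (m i))
            (Fin.cast hd j) := by
    intro j
    simp only []
    congr 1
  rw [Finset.prod_congr rfl fun j _ => key j,
    Fin.prod_congr' (fun i : Fin (r' + 2) => gq ((u :: (M ++ [v])).get (Fin.cast hd.symm i)) (m i)) hd]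
  rw [Fin.prod_univ_succ, Fin.prod_univ_castSucc]
  have h0 : (u :: (M ++ [v])).get (Fin.cast hd.symm (0 : Fin (r' + 2))) = u := rfl
  have hmid : ∀ i : Fin r',
      (u :: (M ++ [v])).get (Fin.cast hd.symm ((i.castSucc).succ)) = M.getD i 0 := by
    intro i
    have hi : (i : ℕ) < M.length := by omega
    rw [List.get_eq_getElem]
    simp only [Fin.coe_cast, Fin.val_succ, Fin.coe_castSucc]
    rw [List.getElem_cons_succ, List.getElem_append_left hi, List.getD_eq_getElem M 0 hi]
  have hlast : (u :: (M ++ [v])).get (Fin.cast hd.symm ((Fin.last r').succ)) = v := by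
    rw [List.get_eq_getElem]
    simp only [Fin.coe_cast, Fin.val_succ, Fin.val_last]
    rw [List.getElem_cons_succ]
    exact List.getElem_concat_length (l := M) (a := v) (i := r') hM.symm _
  rw [h0]
  have hmid' : ∀ i : Fin r', gq ((u :: (M ++ [v])).get (Fin.cast hd.symm ((i.castSucc).succ)))
      (m ((i.castSucc).succ)) = gq (M.getD i 0) (m i.succ.castSucc) := by
    intro i
    rw [hmid i, Fin.succ_castSucc]
  rw [Finset.prod_congr rfl fun i _ => hmid' i, hlast, Fin.succ_last]
  ring

lemma coeff_Fser_normal (r' k n u v : ℕ) (M : List ℕ) (hM : M.length = r')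
    (hsum : u + M.sum + v = k + 1) :
    PowerSeries.coeff n (Fser (u :: (M ++ [v])))
      = ((-1 : ℚ) ^ (k + 1)) • ∑ m ∈ Finset.Nat.antidiagonalTuple (r' + 2) (n + (k + 1)),
          (gq u (m 0) * (∏ i : Fin r', gq (M.getD i 0) (m i.succ.castSucc))
            * gq v (m (Fin.last (r' + 1)))) • wstar ((List.ofFn m).reverse) := by
  have hlen : (u :: (M ++ [v])).length = r' + 2 := by simp [hM]
  have hs : (u :: (M ++ [v])).sum = k + 1 := by
    simp only [List.sum_cons, List.sum_append, List.sum_cons, List.sum_nil]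
    omega
  rw [coeff_Fser, hs]
  congr 1
  refine sum_adT_congr hlen rfl _ _ fun m => ?_
  rw [prodget r' u v M hM m hlen, ofFn_cast hlen m]

end CalcAux2
section CalcAux3

open Finset

lemma sum_getD {d : ℕ} (L : List ℕ) (h : L.length = d) :
    ∑ s : Fin d, L.getD (s : ℕ) 0 = L.sum := by
  subst h
  rw [← sum_get L]
  exact Finset.sum_congr rfl fun s _ => by
    rw [List.getD_eq_getElem _ _ s.isLt, List.get_eq_getElem]

lemma hsplit_sum {r' : ℕ} (m : Fin (r' + 2) → ℕ) :
    ∑ j, m j = m 0 + (∑ i : Fin r', m i.succ.castSucc) + m (Fin.last (r' + 1)) := by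
  rw [Fin.sum_univ_castSucc, Fin.sum_univ_succ]
  simp only [Fin.castSucc_zero, Fin.succ_castSucc]

lemma ofFn_cons_s14 {α : Type*} {d : ℕ} (a : α) (f : Fin d → α) :
    List.ofFn (Fin.cons a f) = a :: List.ofFn f := by
  rw [List.ofFn_succ]
  simp

lemma getD_pos (L : List ℕ) (hpos : ∀ x ∈ L, 0 < x) (i : ℕ) (hi : i < L.length) :
    0 < L.getD i 0 := by
  rw [List.getD_eq_getElem _ _ hi]
  exact hpos _ (List.getElem_mem hi)

lemma piece_T1 (r' k n : ℕ) (L : List ℕ) (hlen : L.length = r' + 1) (hsum : L.sum = k)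
    (hpos : ∀ x ∈ L, 0 < x) :
    (∑ l ∈ Finset.Nat.antidiagonalTuple (r' + 1) n,
      (∏ s : Fin (r' + 1), ((L.getD s.val 0 + l s - 1).choose (l s) : ℚ)) •
        ∑ j ∈ Finset.range ((List.ofFn fun s : Fin (r' + 1) => L.getD s.val 0 + l s).headI - 1),
          wstar (((j + 1) :: (List.ofFn fun s : Fin (r' + 1) => L.getD s.val 0 + l s).tail.reverse)
            ++ [(List.ofFn fun s : Fin (r' + 1) => L.getD s.val 0 + l s).headI - j]))
      = ∑ m ∈ Finset.Nat.antidiagonalTuple (r' + 2) (n + (k + 1)),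
          ((if 2 ≤ m 0 then (1 : ℚ) else 0)
            * (if 1 ≤ m (Fin.last (r' + 1)) then (1 : ℚ) else 0)
            * gq (L.getD 0 0) (m 0 + m (Fin.last (r' + 1)) - 1)
            * ∏ i : Fin r', gq (L.getD (i.val + 1) 0) (m i.succ.castSucc))
            • wstar ((List.ofFn m).reverse) := by
  classical
  have hL0 : 1 ≤ L.getD 0 0 := getD_pos L hpos 0 (by omega)
  have hLi : ∀ i : Fin r', 1 ≤ L.getD (i.val + 1) 0 := fun i => getD_pos L hpos _ (by omega)
  have hkL : L.getD 0 0 + ∑ i : Fin r', L.getD (i.val + 1) 0 = k := by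
    have h2 := sum_getD L hlen
    rw [Fin.sum_univ_succ] at h2
    simp only [Fin.val_zero, Fin.val_succ] at h2
    rw [hsum] at h2
    exact h2
  have step1 : ∀ l ∈ Finset.Nat.antidiagonalTuple (r' + 1) n,
      ((∏ s : Fin (r' + 1), ((L.getD s.val 0 + l s - 1).choose (l s) : ℚ)) •
        ∑ j ∈ Finset.range ((List.ofFn fun s : Fin (r' + 1) => L.getD s.val 0 + l s).headI - 1),
          wstar (((j + 1) :: (List.ofFn fun s : Fin (r' + 1) => L.getD s.val 0 + l s).tail.reverse)
            ++ [(List.ofFn fun s : Fin (r' + 1) => L.getD s.val 0 + l s).headI - j]))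
      = ∑ j ∈ Finset.range (L.getD 0 0 + l 0 - 1),
          (∏ s : Fin (r' + 1), ((L.getD s.val 0 + l s - 1).choose (l s) : ℚ)) •
            wstar ((j + 1) ::
              ((List.ofFn fun i : Fin r' => L.getD (i.val + 1) 0 + l i.succ).reverse
                ++ [L.getD 0 0 + l 0 - j])) := by
    intro l _
    rw [List.ofFn_succ]
    simp only [List.headI, List.tail_cons, Fin.val_zero, Fin.val_succ, List.cons_append]
    exact Finset.smul_sum
  rw [Finset.sum_congr rfl step1]
  rw [Finset.sum_sigma']
  rw [← Finset.sum_filter_of_ne (p := fun m : Fin (r' + 2) → ℕ =>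
      2 ≤ m 0 ∧ 1 ≤ m (Fin.last (r' + 1)) ∧ L.getD 0 0 ≤ m 0 + m (Fin.last (r' + 1)) - 1 ∧
        ∀ i : Fin r', L.getD (i.val + 1) 0 ≤ m i.succ.castSucc) ?hsupp]
  case hsupp =>
    intro m _ hne
    by_contra hnp
    apply hne
    push_neg at hnp
    by_cases h1 : 2 ≤ m 0
    · by_cases h2 : 1 ≤ m (Fin.last (r' + 1))
      · by_cases h3 : L.getD 0 0 ≤ m 0 + m (Fin.last (r' + 1)) - 1
        · obtain ⟨i, hi⟩ := hnp h1 h2 h3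
          rw [show (∏ i : Fin r', gq (L.getD (i.val + 1) 0) (m i.succ.castSucc)) = 0 from
            Finset.prod_eq_zero (Finset.mem_univ i) (by simp only [gq, if_neg (not_le.mpr hi)])]
          rw [mul_zero, zero_smul]
        · rw [show gq (L.getD 0 0) (m 0 + m (Fin.last (r' + 1)) - 1) = 0 from
            by simp only [gq, if_neg h3]]
          rw [mul_zero, zero_mul, zero_smul]
      · rw [if_neg h2, mul_zero, zero_mul, zero_mul, zero_smul]
    · rw [if_neg h1, zero_mul, zero_mul, zero_mul, zero_smul]
  · have hev0 : ∀ (x : ℕ) (f : Fin r' → ℕ) (y : ℕ),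
        (Fin.snoc (Fin.cons x f) y : Fin (r' + 2) → ℕ) 0 = x := by
      intro x f y
      rw [show (0 : Fin (r' + 2)) = Fin.castSucc (0 : Fin (r' + 1)) from rfl,
        Fin.snoc_castSucc, Fin.cons_zero]
    have hevmid : ∀ (x : ℕ) (f : Fin r' → ℕ) (y : ℕ) (i : Fin r'),
        (Fin.snoc (Fin.cons x f) y : Fin (r' + 2) → ℕ) (i.succ.castSucc) = f i := by
      intro x f y i
      rw [Fin.snoc_castSucc, Fin.cons_succ]
    have hevlast : ∀ (x : ℕ) (f : Fin r' → ℕ) (y : ℕ),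
        (Fin.snoc (Fin.cons x f) y : Fin (r' + 2) → ℕ) (Fin.last (r' + 1)) = y := by
      intro x f y
      rw [Fin.snoc_last]
    refine Finset.sum_nbij'
      (i := fun x : (_ : Fin (r' + 1) → ℕ) × ℕ =>
        Fin.snoc (Fin.cons (L.getD 0 0 + x.1 0 - x.2)
          (fun i : Fin r' => L.getD (i.val + 1) 0 + x.1 i.succ)) (x.2 + 1))
      (j := fun m : Fin (r' + 2) → ℕ =>
        ⟨Fin.cons (m 0 + m (Fin.last (r' + 1)) - 1 - L.getD 0 0)
          (fun i : Fin r' => m i.succ.castSucc - L.getD (i.val + 1) 0),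
          m (Fin.last (r' + 1)) - 1⟩)
      ?hi ?hj ?left ?right ?val
    case hi =>
      rintro ⟨l, j⟩ hmem
      rw [Finset.mem_sigma] at hmem
      obtain ⟨hl, hj⟩ := hmem
      dsimp only at hl hj ⊢
      rw [Finset.Nat.mem_antidiagonalTuple] at hl
      rw [Finset.mem_range] at hj
      have hls : l 0 + ∑ i : Fin r', l i.succ = n := by
        rw [← hl, Fin.sum_univ_succ]
      rw [Finset.mem_filter, Finset.Nat.mem_antidiagonalTuple]
      refine ⟨?_, ?_, ?_, ?_, ?_⟩
      · rw [hsplit_sum]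
        simp only [hev0, hevmid, hevlast]
        rw [Finset.sum_add_distrib]
        omega
      · simp only [hev0]; omega
      · simp only [hevlast]; omega
      · simp only [hev0, hevlast]; omega
      · intro i
        simp only [hevmid]
        omega
    case hj =>
      intro m hm
      rw [Finset.mem_filter, Finset.Nat.mem_antidiagonalTuple] at hm
      obtain ⟨hsm, h1, h2, h3, h4⟩ := hm
      rw [hsplit_sum] at hsm
      have hmidsum : (∑ i : Fin r', (m i.succ.castSucc - L.getD (i.val + 1) 0))
          + ∑ i : Fin r', L.getD (i.val + 1) 0 = ∑ i : Fin r', m i.succ.castSucc := by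
        rw [← Finset.sum_add_distrib]
        exact Finset.sum_congr rfl fun i _ => by have := h4 i; omega
      rw [Finset.mem_sigma]
      constructor
      · rw [Finset.Nat.mem_antidiagonalTuple, Fin.sum_univ_succ]
        simp only [Fin.cons_zero, Fin.cons_succ]
        omega
      · rw [Finset.mem_range]
        simp only [Fin.cons_zero]
        omega
    case left =>
      rintro ⟨l, j⟩ hmem
      rw [Finset.mem_sigma] at hmem
      obtain ⟨hl, hj⟩ := hmem
      dsimp only at hl hj ⊢
      rw [Finset.mem_range] at hj
      simp only [hev0, hevmid, hevlast]
      refine Sigma.ext ?_ (heq_of_eq (by dsimp only; omega))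
      dsimp only
      funext s
      induction s using Fin.cases with
      | zero => rw [Fin.cons_zero]; omega
      | succ i => rw [Fin.cons_succ]; omega
    case right =>
      intro m hm
      rw [Finset.mem_filter, Finset.Nat.mem_antidiagonalTuple] at hm
      obtain ⟨hsm, h1, h2, h3, h4⟩ := hm
      dsimp only
      funext s
      induction s using Fin.lastCases with
      | last => rw [hevlast]; omega
      | cast i =>
        rw [Fin.snoc_castSucc]
        induction i using Fin.cases with
        | zero =>
          simp only [Fin.castSucc_zero, Fin.cons_zero]
          omega
        | succ i' =>
          simp only [Fin.cons_succ]
          have := h4 i'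
          omega
    case val =>
      rintro ⟨l, j⟩ hmem
      rw [Finset.mem_sigma] at hmem
      obtain ⟨hl, hj⟩ := hmem
      dsimp only at hl hj ⊢
      rw [Finset.mem_range] at hj
      -- compute the word
      have hword : (List.ofFn (Fin.snoc (Fin.cons (L.getD 0 0 + l 0 - j)
            (fun i : Fin r' => L.getD (i.val + 1) 0 + l i.succ)) (j + 1))).reverse
          = (j + 1) :: ((List.ofFn fun i : Fin r' => L.getD (i.val + 1) 0 + l i.succ).reverse
              ++ [L.getD 0 0 + l 0 - j]) := by
        rw [List.ofFn_succ']
        simp only [Fin.snoc_last, List.concat_eq_append, List.reverse_append]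
        rw [List.ofFn_succ]
        simp only [Fin.castSucc_zero, hev0, Fin.succ_castSucc, hevmid]
        simp [List.reverse_cons]
      rw [hword]
      -- compute the coefficient
      simp only [hev0, hevmid, hevlast]
      rw [if_pos (by omega : 2 ≤ L.getD 0 0 + l 0 - j), if_pos (by omega : 1 ≤ j + 1)]
      have e1 : L.getD 0 0 + l 0 - j + (j + 1) - 1 = L.getD 0 0 + l 0 := by omega
      rw [e1, gq_add]
      have e2 : (∏ i : Fin r', gq (L.getD (i.val + 1) 0)
          (L.getD (i.val + 1) 0 + l i.succ))
          = ∏ i : Fin r', ((L.getD (i.val + 1) 0 + l i.succ - 1).choose (l i.succ) : ℚ) :=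
        Finset.prod_congr rfl fun i _ => gq_add _ _
      rw [e2]
      rw [Fin.prod_univ_succ]
      simp only [Fin.val_zero, Fin.val_succ]
      ring_nf

end CalcAux3
section CalcAux4

open Finset

lemma gq_ne_zero (q μ : ℕ) (h : gq q μ ≠ 0) : q ≤ μ := by
  by_contra hc
  exact h (if_neg hc)

lemma gq_eq_choose (q μ : ℕ) (hq : 1 ≤ q) (hμ : 1 ≤ μ) :
    gq q μ = ((μ - 1).choose (q - 1) : ℚ) := by
  unfold gq
  by_cases h : q ≤ μ
  · rw [if_pos h]
    congr 1
    rw [show μ - q = (μ - 1) - (q - 1) by omega]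
    exact Nat.choose_symm (by omega)
  · rw [if_neg h, eq_comm, Nat.cast_eq_zero]
    exact Nat.choose_eq_zero_of_lt (by omega)

lemma gq_zero_right (q : ℕ) (hq : 1 ≤ q) : gq q 0 = 0 := if_neg (by omega)

lemma alt_q (q : ℕ) :
    ∑ l ∈ Finset.range (q + 1), (-1 : ℚ) ^ l * (q.choose l : ℚ)
      = if q = 0 then 1 else 0 := by
  have h := Int.alternating_sum_range_choose (n := q)
  have h2 := congrArg (fun z : ℤ => (z : ℚ)) h
  push_cast at h2
  rw [h2]

lemma fold_alt (n p k : ℕ) (hp : p ≤ n + 1) :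
    ∑ l ∈ Finset.range (n + 1), (-1 : ℚ) ^ (k + l + 1) * gq (1 + l) p
      = (-1 : ℚ) ^ (k + 1) * (if p = 1 then 1 else 0) := by
  have hsgn : ∀ l : ℕ, (-1 : ℚ) ^ (k + l + 1) = (-1 : ℚ) ^ (k + 1) * (-1 : ℚ) ^ l := by
    intro l
    rw [← pow_add]
    congr 1
    omega
  rw [Finset.sum_congr rfl fun l _ => by rw [hsgn l, mul_assoc], ← Finset.mul_sum]
  congr 1
  by_cases hp0 : p = 0
  · subst hp0
    rw [Finset.sum_congr rfl fun l _ => by rw [gq_zero_right (1 + l) (by omega), mul_zero]]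
    simp
  · have hp1 : 1 ≤ p := by omega
    have hg : ∀ l : ℕ, gq (1 + l) p = ((p - 1).choose l : ℚ) := by
      intro l
      rw [gq_eq_choose (1 + l) p (by omega) hp1, show 1 + l - 1 = l by omega]
    rw [Finset.sum_congr rfl fun l _ => by rw [hg l]]
    have hsub : Finset.range ((p - 1) + 1) ⊆ Finset.range (n + 1) := by
      apply Finset.range_subset_range.mpr
      omega
    rw [← Finset.sum_subset hsub (fun x _ hx => by
      rw [Nat.choose_eq_zero_of_lt (by simp only [Finset.mem_range] at hx ⊢; omega),
        Nat.cast_zero, mul_zero])]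
    rw [alt_q (p - 1)]
    by_cases hp2 : p = 1
    · simp [hp2]
    · rw [if_neg (by omega), if_neg hp2]

lemma vandermonde_q (p s N : ℕ) (hp : 1 ≤ p) (hs : 1 ≤ s) (hN : 1 ≤ N) :
    ∑ a ∈ Finset.range N, ((p - 1).choose a : ℚ) * ((s - 1).choose (N - 1 - a) : ℚ)
      = ((p + s - 2).choose (N - 1) : ℚ) := by
  have h := Nat.add_choose_eq (p - 1) (s - 1) (N - 1)
  rw [Finset.Nat.sum_antidiagonal_eq_sum_range_succ_mk] at h
  rw [Nat.succ_eq_add_one, show N - 1 + 1 = N by omega] at h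
  rw [show p + s - 2 = p - 1 + (s - 1) by omega]
  rw [h]
  push_cast
  exact Finset.sum_congr rfl fun a _ => rfl

lemma fold_LHS (N p s : ℕ) (hN : 1 ≤ N) :
    ∑ a ∈ Finset.range (N - 1), gq (1 + a) p * gq (N - a) s
      = (if 2 ≤ p then (1 : ℚ) else 0) * (if 1 ≤ s then (1 : ℚ) else 0) * gq N (p + s - 1)
        + (if p = 1 then (1 : ℚ) else 0) * gq N s
        - gq N p * gq 1 s := by
  by_cases hs : s = 0
  · subst hs
    rw [Finset.sum_congr rfl fun a ha => by
      rw [gq_zero_right (N - a) (by simp only [Finset.mem_range] at ha; omega), mul_zero]]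
    rw [gq_zero_right N hN, gq_zero_right 1 (by omega)]
    by_cases hp1 : p = 1
    · subst hp1
      simp [Finset.sum_const_zero]
    · rw [if_neg hp1]
      by_cases hp2 : 2 ≤ p
      · rw [if_pos hp2, if_neg (by omega)]
        simp
      · rw [if_neg hp2]
        simp
  · by_cases hp : p = 0
    · subst hp
      rw [Finset.sum_congr rfl fun a _ => by
        rw [show gq (1 + a) 0 = 0 from gq_zero_right (1 + a) (by omega), zero_mul]]
      rw [show gq N 0 = 0 from gq_zero_right N hN]
      simp
    · have hp1 : 1 ≤ p := by omega
      have hs1 : 1 ≤ s := by omega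
      -- rewrite all gq's as binomials
      have hL : ∀ a ∈ Finset.range (N - 1),
          gq (1 + a) p * gq (N - a) s = ((p - 1).choose a : ℚ) * ((s - 1).choose (N - 1 - a) : ℚ) := by
        intro a ha
        simp only [Finset.mem_range] at ha
        rw [gq_eq_choose (1 + a) p (by omega) hp1, gq_eq_choose (N - a) s (by omega) hs1,
          show 1 + a - 1 = a by omega, show N - a - 1 = N - 1 - a by omega]
      rw [Finset.sum_congr rfl hL]
      have hmain : ∑ a ∈ Finset.range (N - 1),
          ((p - 1).choose a : ℚ) * ((s - 1).choose (N - 1 - a) : ℚ)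
          = ((p + s - 2).choose (N - 1) : ℚ) - ((p - 1).choose (N - 1) : ℚ) := by
        have hsplit := Finset.sum_range_succ
          (fun a => ((p - 1).choose a : ℚ) * ((s - 1).choose (N - 1 - a) : ℚ)) (N - 1)
        rw [show N - 1 + 1 = N by omega] at hsplit
        rw [vandermonde_q p s N hp1 hs1 hN] at hsplit
        rw [show N - 1 - (N - 1) = 0 by omega, Nat.choose_zero_right] at hsplit
        push_cast at hsplit
        rw [mul_one] at hsplit
        linarith
      rw [hmain]
      -- now the right side
      rw [if_pos hs1]
      rw [gq_eq_choose N (p + s - 1) hN (by omega), gq_eq_choose N s hN hs1,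
        gq_eq_choose N p hN hp1, gq_eq_choose 1 s (by omega) hs1]
      rw [Nat.choose_zero_right]
      by_cases hp2 : 2 ≤ p
      · rw [if_pos hp2, if_neg (by omega)]
        rw [show p + s - 1 - 1 = p + s - 2 by omega]
        push_cast
        ring
      · have hp1' : p = 1 := by omega
        subst hp1'
        rw [if_neg (by omega), if_pos rfl]
        rw [show 1 + s - 1 - 1 = 1 + s - 2 by omega, show 1 + s - 2 = s - 1 by omega]
        push_cast
        ring
end CalcAux4
section CalcAux5

open Finset

lemma rot_sum {M : Type*} [AddCommMonoid M] (r : ℕ) (hr : 0 < r) (K₀ : List ℕ)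
    (hlen : K₀.length = r) (α : Finset (List ℕ))
    (hα : ∀ L, L ∈ α ↔ ∃ i, L = K₀.rotate i) (g : List ℕ → M) :
    ∑ L ∈ α, g (L.rotate (r - 1)) = ∑ L ∈ α, g L := by
  refine Finset.sum_nbij' (i := fun L => L.rotate (r - 1)) (j := fun L => L.rotate 1)
    ?_ ?_ ?_ ?_ ?_
  · intro L hL
    rw [hα] at hL ⊢
    obtain ⟨i, rfl⟩ := hL
    exact ⟨i + (r - 1), by rw [List.rotate_rotate]⟩
  · intro L hL
    rw [hα] at hL ⊢
    obtain ⟨i, rfl⟩ := hL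
    exact ⟨i + 1, by rw [List.rotate_rotate]⟩
  · intro L hL
    rw [hα] at hL
    obtain ⟨i, rfl⟩ := hL
    rw [List.rotate_rotate, show r - 1 + 1 = r by omega,
      show r = (K₀.rotate i).length by rw [List.length_rotate, hlen], List.rotate_length]
  · intro L hL
    rw [hα] at hL
    obtain ⟨i, rfl⟩ := hL
    rw [List.rotate_rotate, show 1 + (r - 1) = r by omega,
      show r = (K₀.rotate i).length by rw [List.length_rotate, hlen], List.rotate_length]
  · intro L _
    rfl

lemma getD_dropLast (L : List ℕ) (r' : ℕ) (hlen : L.length = r' + 1) (i : ℕ) (hi : i < r') :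
    L.dropLast.getD i 0 = L.getD i 0 := by
  rw [List.getD_eq_getElem _ _ (by rw [List.length_dropLast]; omega),
    List.getD_eq_getElem _ _ (by omega), List.getElem_dropLast]

lemma getLastD_eq_getD : ∀ L : List ℕ, L ≠ [] → L.getLastD 0 = L.getD (L.length - 1) 0 := by
  intro L
  induction L with
  | nil => intro h; exact absurd rfl h
  | cons x t ih =>
    intro _
    cases t with
    | nil => simp
    | cons y s =>
      have := ih (by simp)
      simp only [List.getLastD_cons, List.length_cons] at *
      rw [this]
      rfl

lemma getD_rotate (L : List ℕ) (r' : ℕ) (hlen : L.length = r' + 1) (i : ℕ) (hi : i < r' + 1) :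
    (L.rotate r').getD i 0 = L.getD ((i + r') % (r' + 1)) 0 := by
  have h1 : i < (L.rotate r').length := by rw [List.length_rotate]; omega
  rw [List.getD_eq_getElem _ _ h1, List.getElem_rotate,
    List.getD_eq_getElem _ _ (by rw [hlen]; exact Nat.mod_lt _ (by omega))]
  congr 1
  rw [hlen]

lemma getD_tail (L : List ℕ) (i : ℕ) (hi : i + 1 < L.length) :
    L.tail.getD i 0 = L.getD (i + 1) 0 := by
  rw [List.getD_eq_getElem _ _ (by rw [List.length_tail]; omega),
    List.getD_eq_getElem _ _ hi, List.getElem_tail]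

lemma cons_getD_tail (L : List ℕ) (h : L ≠ []) : L.getD 0 0 :: L.tail = L := by
  cases L with
  | nil => exact absurd rfl h
  | cons x t => rfl

lemma pointwise (k n r' N p s : ℕ) (Li : Fin r' → ℕ) (md : Fin r' → ℕ)
    (hN : 1 ≤ N) (hLi : ∀ i, 1 ≤ Li i) (hksum : N + ∑ i, Li i = k)
    (hm : p + ((∑ i, md i) + s) = n + (k + 1)) :
    (-1 : ℚ) ^ (k + 1) *
        ∑ a ∈ Finset.range (N - 1), gq (1 + a) p * (∏ i, gq (Li i) (md i)) * gq (N - a) s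
      = (-1 : ℚ) ^ (k + 1) * ((if 2 ≤ p then (1 : ℚ) else 0) * (if 1 ≤ s then (1 : ℚ) else 0)
            * gq N (p + s - 1) * ∏ i, gq (Li i) (md i))
        + (∑ l ∈ Finset.range (n + 1),
            (-1 : ℚ) ^ (k + l + 1) * (gq (1 + l) p * (∏ i, gq (Li i) (md i)) * gq N s))
        - (-1 : ℚ) ^ (k + 1) * (gq N p * (∏ i, gq (Li i) (md i)) * gq 1 s) := by
  set Mid : ℚ := ∏ i, gq (Li i) (md i) with hMiddef
  have halt : (∑ l ∈ Finset.range (n + 1),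
      (-1 : ℚ) ^ (k + l + 1) * (gq (1 + l) p * Mid * gq N s))
      = (-1 : ℚ) ^ (k + 1) * (if p = 1 then (1 : ℚ) else 0) * (Mid * gq N s) := by
    rcases eq_or_ne (Mid * gq N s) 0 with h0 | h0
    · rw [Finset.sum_congr rfl fun l _ => by
        rw [show gq (1 + l) p * Mid * gq N s = gq (1 + l) p * (Mid * gq N s) by ring, h0,
          mul_zero, mul_zero]]
      rw [Finset.sum_const_zero, h0, mul_zero]
    · have hMid : Mid ≠ 0 := fun hc => h0 (by rw [hc, zero_mul])
      have hgNs : gq N s ≠ 0 := fun hc => h0 (by rw [hc, mul_zero])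
      have hNs : N ≤ s := gq_ne_zero _ _ hgNs
      have hfac : ∀ i, Li i ≤ md i := by
        intro i
        refine gq_ne_zero _ _ ?_
        exact Finset.prod_ne_zero_iff.mp hMid i (Finset.mem_univ i)
      have hsle : ∑ i, Li i ≤ ∑ i, md i := Finset.sum_le_sum fun i _ => hfac i
      have hple : p ≤ n + 1 := by omega
      rw [Finset.sum_congr rfl fun l _ => by
        rw [show (-1 : ℚ) ^ (k + l + 1) * (gq (1 + l) p * Mid * gq N s)
          = ((-1 : ℚ) ^ (k + l + 1) * gq (1 + l) p) * (Mid * gq N s) by ring]]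
      rw [← Finset.sum_mul, fold_alt n p k hple]
  have hsum2 : (∑ a ∈ Finset.range (N - 1), gq (1 + a) p * Mid * gq (N - a) s)
      = (∑ a ∈ Finset.range (N - 1), gq (1 + a) p * gq (N - a) s) * Mid := by
    rw [Finset.sum_mul]
    exact Finset.sum_congr rfl fun a _ => by ring
  rw [halt, hsum2, fold_LHS N p s hN]
  ring

end CalcAux5

/-- **Lemma 5.3** of Hirose–Murahara–Ono: for a cyclic equivalence class `α` of indices
of depth `r` and weight `k`, with
`C = Σ_{(k₁,…,k_r)∈α} Σ_{a+b=k_r−1, a≥0, b≥1} F(1+a, k₁,…,k_{r−1}, 1+b)`,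
one has
`C = (−1)^{k+1} Σ_{𝐥 ∈ ℤ_{≥0}^r} ũ⋆_CSF(α;𝐥)·t^{l₁+⋯+l_r}
  + Σ_{(k₁,…,k_r)∈α} Σ_{l=0}^∞ F(1+l,k₁,…,k_r)·t^l
  − Σ_{(k₁,…,k_r)∈α} F(k₁,…,k_r,1)` in `𝔥[[t]]`. -/
theorem calc_of_C (r k : ℕ) (hr : 0 < r) (hrk : r ≤ k)
    (K₀ : List ℕ) (hlen : K₀.length = r) (hsum : K₀.sum = k) (hpos : ∀ x ∈ K₀, 0 < x)
    (α : Finset (List ℕ)) (hα : ∀ L, L ∈ α ↔ ∃ i, L = K₀.rotate i) :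
    (∑ L ∈ α, ∑ a ∈ Finset.range (L.getLastD 0 - 1),
        Fser ((1 + a) :: (L.dropLast ++ [1 + (L.getLastD 0 - 1 - a)])))
      = (-1 : ℚ) ^ (k + 1) • PowerSeries.mk (fun n =>
            ∑ l ∈ Finset.Nat.antidiagonalTuple r n, uCSF r α l)
        + (∑ L ∈ α, PowerSeries.mk fun n => ∑ l ∈ Finset.range (n + 1),
            PowerSeries.coeff (n - l) (Fser ((1 + l) :: L)))
        - ∑ L ∈ α, Fser (L ++ [1]) := by
  classical
  obtain ⟨r', rfl⟩ : ∃ r', r = r' + 1 := ⟨r - 1, by omega⟩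
  have hLfacts : ∀ L ∈ α, L.length = r' + 1 ∧ L.sum = k ∧ (∀ x ∈ L, 0 < x) := by
    intro L hL
    rw [hα L] at hL
    obtain ⟨i, rfl⟩ := hL
    exact ⟨by rw [List.length_rotate, hlen], by rw [(List.rotate_perm K₀ i).sum_eq, hsum],
      fun x hx => hpos x ((List.rotate_perm K₀ i).mem_iff.mp hx)⟩
  apply PowerSeries.ext
  intro n
  simp only [map_add, map_sub, map_sum, PowerSeries.coeff_smul, PowerSeries.coeff_mk]
  -- canonical form pieces
  have hA : (∑ L ∈ α, ∑ a ∈ Finset.range (L.getLastD 0 - 1),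
        PowerSeries.coeff n (Fser ((1 + a) :: (L.dropLast ++ [1 + (L.getLastD 0 - 1 - a)]))))
      = ∑ L ∈ α, ∑ m ∈ Finset.Nat.antidiagonalTuple (r' + 2) (n + (k + 1)),
          (∑ a ∈ Finset.range (L.getLastD 0 - 1), (-1 : ℚ) ^ (k + 1) *
            (gq (1 + a) (m 0)
              * (∏ i : Fin r', gq (L.getD i.val 0) (m i.succ.castSucc))
              * gq (L.getLastD 0 - a) (m (Fin.last (r' + 1)))))
            • wstar ((List.ofFn m).reverse) := by
    refine Finset.sum_congr rfl fun L hL => ?_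
    obtain ⟨hlenL, hsumL, hposL⟩ := hLfacts L hL
    have hne : L ≠ [] := by intro h; rw [h] at hlenL; simp at hlenL
    have hNpos : 1 ≤ L.getLastD 0 := getLastD_pos L hne hposL
    have hdls : L.dropLast.sum + L.getLastD 0 = L.sum := sum_dropLast L hne
    have step : ∀ a ∈ Finset.range (L.getLastD 0 - 1),
        PowerSeries.coeff n (Fser ((1 + a) :: (L.dropLast ++ [1 + (L.getLastD 0 - 1 - a)])))
          = ∑ m ∈ Finset.Nat.antidiagonalTuple (r' + 2) (n + (k + 1)),
              ((-1 : ℚ) ^ (k + 1) * (gq (1 + a) (m 0)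
                * (∏ i : Fin r', gq (L.getD i.val 0) (m i.succ.castSucc))
                * gq (L.getLastD 0 - a) (m (Fin.last (r' + 1)))))
                • wstar ((List.ofFn m).reverse) := by
      intro a ha
      rw [Finset.mem_range] at ha
      rw [coeff_Fser_normal r' k n (1 + a) (1 + (L.getLastD 0 - 1 - a)) L.dropLast
        (by rw [List.length_dropLast, hlenL]; omega) (by omega)]
      rw [Finset.smul_sum]
      refine Finset.sum_congr rfl fun m _ => ?_
      rw [smul_smul]
      congr 1
      rw [show 1 + (L.getLastD 0 - 1 - a) = L.getLastD 0 - a by omega]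
      rw [Finset.prod_congr rfl fun i (_ : i ∈ Finset.univ) =>
        by rw [getD_dropLast L r' hlenL i.val i.isLt]]
    rw [Finset.sum_congr rfl step, Finset.sum_comm]
    exact Finset.sum_congr rfl fun m _ => (Finset.sum_smul).symm
  have hB2 : (∑ L ∈ α, ∑ l ∈ Finset.range (n + 1),
        PowerSeries.coeff (n - l) (Fser ((1 + l) :: L)))
      = ∑ L ∈ α, ∑ m ∈ Finset.Nat.antidiagonalTuple (r' + 2) (n + (k + 1)),
          (∑ l ∈ Finset.range (n + 1), (-1 : ℚ) ^ (k + l + 1) *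
            (gq (1 + l) (m 0)
              * (∏ i : Fin r', gq (L.getD i.val 0) (m i.succ.castSucc))
              * gq (L.getLastD 0) (m (Fin.last (r' + 1)))))
            • wstar ((List.ofFn m).reverse) := by
    refine Finset.sum_congr rfl fun L hL => ?_
    obtain ⟨hlenL, hsumL, hposL⟩ := hLfacts L hL
    have hne : L ≠ [] := by intro h; rw [h] at hlenL; simp at hlenL
    have hdls : L.dropLast.sum + L.getLastD 0 = L.sum := sum_dropLast L hne
    have step : ∀ l ∈ Finset.range (n + 1),
        PowerSeries.coeff (n - l) (Fser ((1 + l) :: L))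
          = ∑ m ∈ Finset.Nat.antidiagonalTuple (r' + 2) (n + (k + 1)),
              ((-1 : ℚ) ^ (k + l + 1) * (gq (1 + l) (m 0)
                * (∏ i : Fin r', gq (L.getD i.val 0) (m i.succ.castSucc))
                * gq (L.getLastD 0) (m (Fin.last (r' + 1)))))
                • wstar ((List.ofFn m).reverse) := by
      intro l hl
      rw [Finset.mem_range] at hl
      rw [show (1 + l) :: L = (1 + l) :: (L.dropLast ++ [L.getLastD 0]) by
        rw [dropLast_append_getLastD L hne]]
      rw [coeff_Fser_normal r' (k + l) (n - l) (1 + l) (L.getLastD 0) L.dropLast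
        (by rw [List.length_dropLast, hlenL]; omega) (by omega)]
      rw [show n - l + (k + l + 1) = n + (k + 1) by omega]
      rw [Finset.smul_sum]
      refine Finset.sum_congr rfl fun m _ => ?_
      rw [smul_smul]
      congr 1
      rw [Finset.prod_congr rfl fun i (_ : i ∈ Finset.univ) =>
        by rw [getD_dropLast L r' hlenL i.val i.isLt]]
    rw [Finset.sum_congr rfl step, Finset.sum_comm]
    exact Finset.sum_congr rfl fun m _ => (Finset.sum_smul).symm
  have hB3 : (∑ L ∈ α, PowerSeries.coeff n (Fser (L ++ [1])))
      = ∑ L ∈ α, ∑ m ∈ Finset.Nat.antidiagonalTuple (r' + 2) (n + (k + 1)),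
          ((-1 : ℚ) ^ (k + 1) * (gq (L.getLastD 0) (m 0)
            * (∏ i : Fin r', gq (L.getD i.val 0) (m i.succ.castSucc))
            * gq 1 (m (Fin.last (r' + 1)))))
            • wstar ((List.ofFn m).reverse) := by
    have hrot := rot_sum (r' + 1) (by omega) K₀ hlen α hα
      (fun L => PowerSeries.coeff n (Fser (L ++ [1])))
    simp only [Nat.add_sub_cancel] at hrot
    rw [← hrot]
    refine Finset.sum_congr rfl fun L hL => ?_
    obtain ⟨hlenL, hsumL, hposL⟩ := hLfacts L hL
    have hne : L ≠ [] := by intro h; rw [h] at hlenL; simp at hlenL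
    have hlenρ : (L.rotate r').length = r' + 1 := by rw [List.length_rotate, hlenL]
    have hneρ : L.rotate r' ≠ [] := by
      intro h
      rw [h] at hlenρ
      simp at hlenρ
    have hsumρ : (L.rotate r').sum = k := by rw [(List.rotate_perm L r').sum_eq, hsumL]
    have e0 : (L.rotate r').getD 0 0 = L.getLastD 0 := by
      rw [getD_rotate L r' hlenL 0 (by omega), Nat.zero_add,
        Nat.mod_eq_of_lt (by omega), getLastD_eq_getD L hne, hlenL, Nat.add_sub_cancel]
    have emid : ∀ i : Fin r', (L.rotate r').tail.getD i.val 0 = L.getD i.val 0 := by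
      intro i
      rw [getD_tail _ _ (by rw [hlenρ]; omega),
        getD_rotate L r' hlenL (i.val + 1) (by omega),
        show i.val + 1 + r' = (r' + 1) + i.val by omega, Nat.add_mod_left,
        Nat.mod_eq_of_lt (by omega)]
    try dsimp only
    rw [show L.rotate r' ++ [1] = (L.rotate r').getD 0 0 :: ((L.rotate r').tail ++ [1]) by
      rw [← List.cons_append, cons_getD_tail _ hneρ]]
    have hsumtail : (L.rotate r').getD 0 0 + (L.rotate r').tail.sum + 1 = k + 1 := by
      have : ((L.rotate r').getD 0 0 :: (L.rotate r').tail).sum = k := by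
        rw [cons_getD_tail _ hneρ, hsumρ]
      rw [List.sum_cons] at this
      omega
    rw [coeff_Fser_normal r' k n ((L.rotate r').getD 0 0) 1 (L.rotate r').tail
      (by rw [List.length_tail, hlenρ]; omega) hsumtail]
    rw [Finset.smul_sum]
    refine Finset.sum_congr rfl fun m _ => ?_
    rw [smul_smul]
    congr 1
    rw [e0]
    rw [Finset.prod_congr rfl fun i (_ : i ∈ Finset.univ) => by rw [emid i]]
  have hB1 : (∑ l ∈ Finset.Nat.antidiagonalTuple (r' + 1) n, uCSF (r' + 1) α l)
      = ∑ L ∈ α, ∑ m ∈ Finset.Nat.antidiagonalTuple (r' + 2) (n + (k + 1)),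
          (((if 2 ≤ m 0 then (1 : ℚ) else 0)
            * (if 1 ≤ m (Fin.last (r' + 1)) then (1 : ℚ) else 0)
            * gq (L.getLastD 0) (m 0 + m (Fin.last (r' + 1)) - 1)
            * ∏ i : Fin r', gq (L.getD i.val 0) (m i.succ.castSucc)))
            • wstar ((List.ofFn m).reverse) := by
    simp only [uCSF]
    rw [Finset.sum_comm]
    have hrot := rot_sum (r' + 1) (by omega) K₀ hlen α hα
      (fun L => ∑ l ∈ Finset.Nat.antidiagonalTuple (r' + 1) n,
        (∏ s : Fin (r' + 1), ((L.getD s.val 0 + l s - 1).choose (l s) : ℚ)) •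
          ∑ j ∈ Finset.range ((List.ofFn fun s : Fin (r' + 1) => L.getD s.val 0 + l s).headI - 1),
            wstar (((j + 1) ::
              (List.ofFn fun s : Fin (r' + 1) => L.getD s.val 0 + l s).tail.reverse)
              ++ [(List.ofFn fun s : Fin (r' + 1) => L.getD s.val 0 + l s).headI - j]))
    simp only [Nat.add_sub_cancel] at hrot
    rw [← hrot]
    refine Finset.sum_congr rfl fun L hL => ?_
    obtain ⟨hlenL, hsumL, hposL⟩ := hLfacts L hL
    have hne : L ≠ [] := by intro h; rw [h] at hlenL; simp at hlenL
    have hlenρ : (L.rotate r').length = r' + 1 := by rw [List.length_rotate, hlenL]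
    have hsumρ : (L.rotate r').sum = k := by rw [(List.rotate_perm L r').sum_eq, hsumL]
    have hposρ : ∀ x ∈ L.rotate r', 0 < x := fun x hx =>
      hposL x ((List.rotate_perm L r').mem_iff.mp hx)
    have e0 : (L.rotate r').getD 0 0 = L.getLastD 0 := by
      rw [getD_rotate L r' hlenL 0 (by omega), Nat.zero_add,
        Nat.mod_eq_of_lt (by omega), getLastD_eq_getD L hne, hlenL, Nat.add_sub_cancel]
    have emid2 : ∀ i : Fin r', (L.rotate r').getD (i.val + 1) 0 = L.getD i.val 0 := by
      intro i
      rw [getD_rotate L r' hlenL (i.val + 1) (by omega),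
        show i.val + 1 + r' = (r' + 1) + i.val by omega, Nat.add_mod_left,
        Nat.mod_eq_of_lt (by omega)]
    try dsimp only
    rw [piece_T1 r' k n (L.rotate r') hlenρ hsumρ hposρ]
    refine Finset.sum_congr rfl fun m _ => ?_
    congr 1
    rw [e0]
    rw [Finset.prod_congr rfl fun i (_ : i ∈ Finset.univ) => by rw [emid2 i]]
  rw [hA, hB2, hB3, hB1]
  rw [Finset.smul_sum]
  rw [Finset.sum_congr rfl fun L (_ : L ∈ α) => Finset.smul_sum (r := (-1 : ℚ) ^ (k + 1))]
  rw [← Finset.sum_add_distrib, ← Finset.sum_sub_distrib]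
  refine Finset.sum_congr rfl fun L hL => ?_
  rw [← Finset.sum_add_distrib, ← Finset.sum_sub_distrib]
  refine Finset.sum_congr rfl fun m hm => ?_
  rw [smul_smul, ← add_smul, ← sub_smul]
  congr 1
  -- scalar identity
  obtain ⟨hlenL, hsumL, hposL⟩ := hLfacts L hL
  have hne : L ≠ [] := by intro h; rw [h] at hlenL; simp at hlenL
  have hN : 1 ≤ L.getLastD 0 := getLastD_pos L hne hposL
  have hLi : ∀ i : Fin r', 1 ≤ L.getD i.val 0 := fun i => getD_pos L hposL i.val (by omega)
  have hksum : L.getLastD 0 + ∑ i : Fin r', L.getD i.val 0 = k := by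
    have h1 : ∑ s : Fin (r' + 1), L.getD (s : ℕ) 0 = k := by rw [sum_getD L hlenL, hsumL]
    rw [Fin.sum_univ_castSucc] at h1
    simp only [Fin.coe_castSucc, Fin.val_last] at h1
    have h2 : L.getD r' 0 = L.getLastD 0 := by
      rw [getLastD_eq_getD L hne, hlenL, Nat.add_sub_cancel]
    omega
  have hmm : m 0 + ((∑ i : Fin r', m i.succ.castSucc) + m (Fin.last (r' + 1)))
      = n + (k + 1) := by
    rw [Finset.Nat.mem_antidiagonalTuple] at hm
    have h3 := hsplit_sum m
    omega
  rw [← Finset.mul_sum]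
  exact pointwise k n r' (L.getLastD 0) (m 0) (m (Fin.last (r' + 1)))
    (fun i => L.getD i.val 0) (fun i => m i.succ.castSucc) hN hLi hksum hmm
end
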